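/- arXiv:2206.07995 — 2 statements merged into one kernel-verified Lean document; each statement's English description precedes it below -/
import Mathlib

section
/- Let q ≥ 3 and n ≥ 1 be integers. Then max_{x ∈ Z_q^n} |L_1(x)| = n²(q−1) − n + 2, and the maximum is attained exactly at those sequences x = (x_1,…,x_n) ∈ Z_q^n whose number of runs is n (i.e., x_i ≠ x_{i+1} for all 1 ≤ i ≤ n−1) and which satisfy x_i ≠ x_{i+2} for all 1 ≤ i ≤ n−2. -/
open scoped Classical

/-- Length of a longest common subsequence of two lists. -/
noncomputable def lcsLen {α : Type*} (x y : List α) : ℕ :=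
  sSup {k | ∃ z : List α, z.Sublist x ∧ z.Sublist y ∧ z.length = k}

/-- The fixed-length Levenshtein (FLL) distance on `Fin n → Fin q`:
`d_ℓ(x,y) = n - LCS(x,y)`. -/
noncomputable def fllDist {q n : ℕ} (x y : Fin n → Fin q) : ℕ :=
  n - lcsLen (List.ofFn x) (List.ofFn y)

/-- The FLL `t`-ball centered at `x`. -/
noncomputable def fllBall (q n t : ℕ) (x : Fin n → Fin q) : Finset (Fin n → Fin q) :=
  Finset.univ.filter fun y => fllDist x y ≤ t

/-- The Hamming `t`-ball centered at `x`. -/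
noncomputable def hammingBall (q n t : ℕ) (x : Fin n → Fin q) : Finset (Fin n → Fin q) :=
  Finset.univ.filter fun y => hammingDist x y ≤ t

/-- The number of runs (maximal blocks of consecutive equal symbols) of a list. -/
def numRuns {α : Type*} [DecidableEq α] : List α → ℕ
  | [] => 0
  | [_] => 1
  | a :: b :: l => (if a = b then 0 else 1) + numRuns (b :: l)

/-- A list is alternating (of shape `σ σ' σ σ' ⋯` with `σ ≠ σ'`): adjacent entries
differ and entries two apart agree. -/
def IsAltList {α : Type*} (l : List α) : Prop :=
  (∀ i, ∀ h : i + 1 < l.length, l.get ⟨i, by omega⟩ ≠ l.get ⟨i + 1, h⟩) ∧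
  (∀ i, ∀ h : i + 2 < l.length, l.get ⟨i, by omega⟩ = l.get ⟨i + 2, h⟩)

/-- The contiguous block `l_i ⋯ l_j` of a list (0-indexed, inclusive). -/
def blockSeg {α : Type*} (l : List α) (i j : ℕ) : List α := (l.drop i).take (j + 1 - i)

/-- `(i, j)` indexes a maximal alternating segment of `l`. -/
def IsMaxAltSeg {α : Type*} (l : List α) (i j : ℕ) : Prop :=
  i ≤ j ∧ j < l.length ∧ IsAltList (blockSeg l i j) ∧
    (i = 0 ∨ ¬ IsAltList (blockSeg l (i - 1) j)) ∧
    (j = l.length - 1 ∨ ¬ IsAltList (blockSeg l i (j + 1)))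

/-- The index pairs of the maximal alternating segments of `l`. -/
noncomputable def maxAltSegs {α : Type*} (l : List α) : Finset (ℕ × ℕ) :=
  (Finset.range l.length ×ˢ Finset.range l.length).filter fun p => IsMaxAltSeg l p.1 p.2

/-- `A(x)`: the number of maximal alternating segments. -/
noncomputable def numAltSegs {α : Type*} (l : List α) : ℕ := (maxAltSegs l).card

/-- The sum `Σ s_i` of the lengths of the maximal alternating segments. -/
noncomputable def segLenSum {α : Type*} (l : List α) : ℕ :=
  ∑ p ∈ maxAltSegs l, (p.2 + 1 - p.1)

/-- The sum `Σ s_i²` of the squared lengths of the maximal alternating segments. -/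
noncomputable def segLenSqSum {α : Type*} (l : List α) : ℕ :=
  ∑ p ∈ maxAltSegs l, (p.2 + 1 - p.1) ^ 2

/-- `x ∈ Z_2^n` is `a`-balanced: it has `a` maximal alternating segments, each of
length `⌈n/a⌉` or `⌈n/a⌉ - 1`. -/
def IsBalanced (n a : ℕ) (x : Fin n → Fin 2) : Prop :=
  numAltSegs (List.ofFn x) = a ∧
    ∀ p ∈ maxAltSegs (List.ofFn x),
      p.2 + 1 - p.1 = (n + a - 1) / a ∨ p.2 + 1 - p.1 = (n + a - 1) / a - 1

/-- The number of zero entries of the difference vector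
`x' = (x₂ - x₁, …, x_n - x_{n-1})` (differences mod `q`). -/
def zerosDiff {q n : ℕ} (x : Fin n → Fin q) : ℕ :=
  (List.zipWith (fun a b => a - b) (List.ofFn x).tail (List.ofFn x)).countP fun v => v.val == 0

/-- Hamming weight of a binary word. -/
def wt {n : ℕ} (a : Fin n → Fin 2) : ℕ := (Finset.univ.filter fun i => a i ≠ 0).card

/-- An anticode of diameter one in `Z_2^n` under the FLL metric. -/
def IsAnticode1 (n : ℕ) (A : Finset (Fin n → Fin 2)) : Prop :=
  ∀ a ∈ A, ∀ b ∈ A, fllDist a b ≤ 1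

/-- A maximal anticode of diameter one. -/
def IsMaximalAnticode1 (n : ℕ) (A : Finset (Fin n → Fin 2)) : Prop :=
  IsAnticode1 n A ∧ ∀ B : Finset (Fin n → Fin 2), IsAnticode1 n B → A ⊆ B → A = B

/-- `χ(s)`: the total number, over all `x ∈ Z_q^n`, of maximal alternating
segments of `x` of length `s`. -/
noncomputable def chi (q n s : ℕ) : ℕ :=
  ∑ x : Fin n → Fin q, ((maxAltSegs (List.ofFn x)).filter fun p => p.2 + 1 - p.1 = s).card


section Work
variable {q n : ℕ}

lemma exists_eraseIdx_of_sublist {α : Type*} {z l : List α} (h : z.Sublist l)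
    (hl : z.length + 1 = l.length) : ∃ i < l.length, z = l.eraseIdx i := by
  induction h with
  | slnil => simp at hl
  | @cons l₁ l₂ a h ih =>
      have : l₁.length = l₂.length := by simp at hl; omega
      have := h.eq_of_length this
      exact ⟨0, by simp, by simp [this]⟩
  | @cons_cons l₁ l₂ a h ih =>
      have hl' : l₁.length + 1 = l₂.length := by simp at hl ⊢; omega
      obtain ⟨i, hi, hz⟩ := ih hl'
      exact ⟨i + 1, by simpa using hi, by simp [List.eraseIdx_cons_succ, hz]⟩

lemma fllDist_le_one_iff {q n : ℕ} (x y : Fin n → Fin q) :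
    fllDist x y ≤ 1 ↔
      ∃ z : List (Fin q), z.Sublist (List.ofFn x) ∧ z.Sublist (List.ofFn y) ∧
        z.length = n - 1 := by
  classical
  set S : Set ℕ := {k | ∃ z : List (Fin q), z.Sublist (List.ofFn x) ∧ z.Sublist (List.ofFn y) ∧ z.length = k} with hS
  have hbdd : BddAbove S := by
    refine ⟨n, fun k hk => ?_⟩
    obtain ⟨z, hzx, _, hzl⟩ := hk
    have := hzx.length_le
    simp [List.length_ofFn] at this
    omega
  have hne : S.Nonempty := ⟨0, ⟨[], List.nil_sublist _, List.nil_sublist _, rfl⟩⟩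
  have hmem : sSup S ∈ S := Nat.sSup_mem hne hbdd
  have hle : sSup S ≤ n := by
    obtain ⟨z, hzx, _, hzl⟩ := hmem
    have := hzx.length_le
    simp [List.length_ofFn] at this
    omega
  constructor
  · intro h
    have hd : fllDist x y = n - sSup S := rfl
    have hge : n - 1 ≤ sSup S := by rw [hd] at h; omega
    obtain ⟨z, hzx, hzy, hzl⟩ := hmem
    refine ⟨z.take (n-1), (List.take_sublist _ _).trans hzx, (List.take_sublist _ _).trans hzy, ?_⟩
    simp [List.length_take]
    omega
  · rintro ⟨z, hzx, hzy, hzl⟩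
    have : n - 1 ≤ sSup S := le_csSup hbdd ⟨z, hzx, hzy, hzl⟩
    have hd : fllDist x y = n - sSup S := rfl
    rw [hd]; omega

lemma mem_fllBall_iff {q n : ℕ} (hn : 1 ≤ n) (x y : Fin n → Fin q) :
    y ∈ fllBall q n 1 x ↔
      ∃ a b : Fin n, (List.ofFn x).eraseIdx a.val = (List.ofFn y).eraseIdx b.val := by
  rw [fllBall, Finset.mem_filter]
  simp only [Finset.mem_univ, true_and]
  rw [fllDist_le_one_iff]
  constructor
  · rintro ⟨z, hzx, hzy, hzl⟩
    obtain ⟨a, ha, hza⟩ := exists_eraseIdx_of_sublist hzx (by simp [hzl]; omega)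
    obtain ⟨b, hb, hzb⟩ := exists_eraseIdx_of_sublist hzy (by simp [hzl]; omega)
    simp [List.length_ofFn] at ha hb
    exact ⟨⟨a, ha⟩, ⟨b, hb⟩, by rw [← hza, ← hzb]⟩
  · rintro ⟨a, b, hab⟩
    refine ⟨(List.ofFn x).eraseIdx a.val, List.eraseIdx_sublist _ _, hab ▸ List.eraseIdx_sublist _ _, ?_⟩
    simp [List.length_eraseIdx, a.isLt]

def mkL (x : Fin n → Fin q) (a b : Fin n) (c : Fin q) : Fin n → Fin q :=
  fun k => if k.val < a.val ∨ b.val < k.val then x k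
    else if h : k.val < b.val then x ⟨k.val + 1, Nat.lt_of_le_of_lt h b.isLt⟩ else c

def mkR (x : Fin n → Fin q) (a b : Fin n) (c : Fin q) : Fin n → Fin q :=
  fun k => if k.val < a.val ∨ b.val < k.val then x k
    else if _ : a.val < k.val then x ⟨k.val - 1, Nat.lt_of_le_of_lt (Nat.sub_le _ _) k.isLt⟩ else c

lemma erase_pointwise {x y : Fin n → Fin q} {a b : Fin n}
    (hab : (List.ofFn x).eraseIdx a.val = (List.ofFn y).eraseIdx b.val)
    {j : ℕ} (hj : j < n - 1) :
    (if j < a.val then x ⟨j, by omega⟩ else x ⟨j + 1, by omega⟩)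
      = (if j < b.val then y ⟨j, by omega⟩ else y ⟨j + 1, by omega⟩) := by
  have hx : j < ((List.ofFn x).eraseIdx a.val).length := by
    rw [List.length_eraseIdx]
    simp [a.isLt, List.length_ofFn]
    omega
  have h1 := List.getElem_of_eq hab hx
  rw [List.getElem_eraseIdx, List.getElem_eraseIdx] at h1
  simp only [List.getElem_ofFn] at h1
  split_ifs at h1 ⊢ <;> first | exact h1 | omega

lemma left_of_erase {x y : Fin n → Fin q} {a b : Fin n} (hab : a.val ≤ b.val)
    (h : (List.ofFn x).eraseIdx a.val = (List.ofFn y).eraseIdx b.val) :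
    y = mkL x a b (y b) := by
  funext k
  have hk := k.isLt
  have hb := b.isLt
  unfold mkL
  rcases Nat.lt_or_ge k.val a.val with h1 | h1
  · have hp := erase_pointwise h (j := k.val) (by omega)
    rw [if_pos h1, if_pos (by omega)] at hp
    rw [if_pos (Or.inl h1)]
    simpa using hp.symm
  rcases Nat.lt_or_ge k.val b.val with h2 | h2
  · have hp := erase_pointwise h (j := k.val) (by omega)
    rw [if_neg (by omega), if_pos h2] at hp
    rw [if_neg (by omega), dif_pos h2]
    simpa using hp.symm
  rcases Nat.eq_or_lt_of_le h2 with h3 | h3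
  · rw [if_neg (by omega), dif_neg (by omega)]
    exact congrArg y (Fin.ext h3.symm)
  · have hp := erase_pointwise h (j := k.val - 1) (by omega)
    rw [if_neg (by omega), if_neg (by omega)] at hp
    rw [if_pos (Or.inr h3)]
    calc y k = y ⟨k.val - 1 + 1, by omega⟩ :=
          congrArg y (Fin.ext (show k.val = k.val - 1 + 1 by omega))
      _ = x ⟨k.val - 1 + 1, by omega⟩ := hp.symm
      _ = x k := congrArg x (Fin.ext (show k.val - 1 + 1 = k.val by omega))

lemma right_of_erase {x y : Fin n → Fin q} {a b : Fin n} (hba : b.val ≤ a.val)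
    (h : (List.ofFn x).eraseIdx a.val = (List.ofFn y).eraseIdx b.val) :
    y = mkR x b a (y b) := by
  funext k
  have hk := k.isLt
  have ha := a.isLt
  unfold mkR
  rcases Nat.lt_or_ge k.val b.val with h1 | h1
  · have hp := erase_pointwise h (j := k.val) (by omega)
    rw [if_pos (by omega), if_pos h1] at hp
    rw [if_pos (Or.inl h1)]
    simpa using hp.symm
  rcases Nat.eq_or_lt_of_le h1 with h2 | h2
  · rw [if_neg (by omega), dif_neg (by omega)]
    exact congrArg y (Fin.ext h2.symm)
  rcases Nat.lt_or_ge a.val k.val with h3 | h3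
  · have hp := erase_pointwise h (j := k.val - 1) (by omega)
    rw [if_neg (by omega), if_neg (by omega)] at hp
    rw [if_pos (Or.inr h3)]
    calc y k = y ⟨k.val - 1 + 1, by omega⟩ :=
          congrArg y (Fin.ext (show k.val = k.val - 1 + 1 by omega))
      _ = x ⟨k.val - 1 + 1, by omega⟩ := hp.symm
      _ = x k := congrArg x (Fin.ext (show k.val - 1 + 1 = k.val by omega))
  · have hp := erase_pointwise h (j := k.val - 1) (by omega)
    rw [if_pos (by omega), if_neg (by omega)] at hp
    rw [if_neg (by omega), dif_pos h2]
    calc y k = y ⟨k.val - 1 + 1, by omega⟩ :=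
          congrArg y (Fin.ext (show k.val = k.val - 1 + 1 by omega))
      _ = x ⟨k.val - 1, by omega⟩ := hp.symm

section MkLemmas
variable {x : Fin n → Fin q} {a b : Fin n} {c : Fin q} {k : Fin n}

lemma mkL_lt (h : k.val < a.val) : mkL x a b c k = x k := by
  simp only [mkL]; rw [if_pos (Or.inl h)]

lemma mkL_gt (h : b.val < k.val) : mkL x a b c k = x k := by
  simp only [mkL]; rw [if_pos (Or.inr h)]

lemma mkL_mid (h1 : a.val ≤ k.val) (h2 : k.val < b.val) :
    mkL x a b c k = x ⟨k.val + 1, Nat.lt_of_le_of_lt h2 b.isLt⟩ := by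
  simp only [mkL]; rw [if_neg (by omega), dif_pos h2]

lemma mkL_last (h1 : a.val ≤ b.val) : mkL x a b c b = c := by
  simp only [mkL]; rw [if_neg (by omega), dif_neg (by omega)]

lemma mkR_lt (h : k.val < a.val) : mkR x a b c k = x k := by
  simp only [mkR]; rw [if_pos (Or.inl h)]

lemma mkR_gt (h : b.val < k.val) : mkR x a b c k = x k := by
  simp only [mkR]; rw [if_pos (Or.inr h)]

lemma mkR_mid (h1 : a.val < k.val) (h2 : k.val ≤ b.val) :
    mkR x a b c k = x ⟨k.val - 1, Nat.lt_of_le_of_lt (Nat.sub_le _ _) k.isLt⟩ := by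
  simp only [mkR]; rw [if_neg (by omega), dif_pos h1]

lemma mkR_first (h1 : a.val ≤ b.val) : mkR x a b c a = c := by
  simp only [mkR]; rw [if_neg (by omega), dif_neg (by omega)]

end MkLemmas

lemma erase_of_left {x : Fin n → Fin q} {a b : Fin n} (hab : a.val ≤ b.val) (c : Fin q) :
    (List.ofFn x).eraseIdx a.val = (List.ofFn (mkL x a b c)).eraseIdx b.val := by
  have ha := a.isLt
  have hb := b.isLt
  apply List.ext_getElem
  · rw [List.length_eraseIdx, List.length_eraseIdx]
    simp [List.length_ofFn, ha, hb]
  · intro j h1 h2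
    rw [List.length_eraseIdx, if_pos (by simpa [List.length_ofFn] using ha)] at h1
    simp only [List.length_ofFn] at h1
    rw [List.getElem_eraseIdx, List.getElem_eraseIdx]
    simp only [List.getElem_ofFn]
    rcases Nat.lt_or_ge j a.val with hja | hja
    · rw [dif_pos hja, dif_pos (by omega)]
      exact (mkL_lt hja).symm
    rcases Nat.lt_or_ge j b.val with hjb | hjb
    · rw [dif_neg (by omega), dif_pos hjb]
      exact (mkL_mid (k := ⟨j, by omega⟩) hja hjb).symm
    · rw [dif_neg (by omega), dif_neg (by omega)]
      exact (mkL_gt (show b.val < j + 1 by omega)).symm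

lemma erase_of_right {x : Fin n → Fin q} {a b : Fin n} (hab : a.val ≤ b.val) (c : Fin q) :
    (List.ofFn x).eraseIdx b.val = (List.ofFn (mkR x a b c)).eraseIdx a.val := by
  have ha := a.isLt
  have hb := b.isLt
  apply List.ext_getElem
  · rw [List.length_eraseIdx, List.length_eraseIdx]
    simp [List.length_ofFn, ha, hb]
  · intro j h1 h2
    rw [List.length_eraseIdx, if_pos (by simpa [List.length_ofFn] using hb)] at h1
    simp only [List.length_ofFn] at h1
    rw [List.getElem_eraseIdx, List.getElem_eraseIdx]
    simp only [List.getElem_ofFn]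
    rcases Nat.lt_or_ge j a.val with hja | hja
    · rw [dif_pos (by omega), dif_pos hja]
      exact (mkR_lt hja).symm
    rcases Nat.lt_or_ge j b.val with hjb | hjb
    · rw [dif_pos hjb, dif_neg (by omega)]
      exact (mkR_mid (k := ⟨j + 1, by omega⟩) (show a.val < j + 1 by omega) (show j + 1 ≤ b.val by omega)).symm
    · rw [dif_neg (by omega), dif_neg (by omega)]
      exact (mkR_gt (show b.val < j + 1 by omega)).symm

lemma mem_fllBall_iff_mk (hn : 1 ≤ n) (x y : Fin n → Fin q) :
    y ∈ fllBall q n 1 x ↔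
      ∃ a b : Fin n, a.val ≤ b.val ∧ ((∃ c, y = mkL x a b c) ∨ (∃ c, y = mkR x a b c)) := by
  rw [mem_fllBall_iff hn]
  constructor
  · rintro ⟨a, b, h⟩
    rcases Nat.lt_or_ge b.val a.val with hab | hab
    · exact ⟨b, a, Nat.le_of_lt hab, Or.inr ⟨y b, right_of_erase (Nat.le_of_lt hab) h⟩⟩
    · exact ⟨a, b, hab, Or.inl ⟨y b, left_of_erase hab h⟩⟩
  · rintro ⟨a, b, hab, (⟨c, rfl⟩ | ⟨c, rfl⟩)⟩
    · exact ⟨a, b, erase_of_left hab c⟩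
    · exact ⟨b, a, erase_of_right hab c⟩

def Ds (x y : Fin n → Fin q) : Finset (Fin n) := Finset.univ.filter fun k => y k ≠ x k

lemma mem_Ds {x y : Fin n → Fin q} {k : Fin n} : k ∈ Ds x y ↔ y k ≠ x k := by
  simp [Ds]

def CanonL (x y : Fin n → Fin q) (a b : Fin n) : Prop :=
  a.val ≤ b.val ∧
  (∀ k : Fin n, k.val < a.val ∨ b.val < k.val → y k = x k) ∧
  (∀ k : Fin n, a.val ≤ k.val → ∀ h : k.val < b.val,
      y k = x ⟨k.val + 1, Nat.lt_of_le_of_lt h b.isLt⟩) ∧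
  y a ≠ x a ∧ y b ≠ x b

def CanonR (x y : Fin n → Fin q) (a b : Fin n) : Prop :=
  a.val ≤ b.val ∧
  (∀ k : Fin n, k.val < a.val ∨ b.val < k.val → y k = x k) ∧
  (∀ k : Fin n, a.val < k.val → k.val ≤ b.val →
      y k = x ⟨k.val - 1, Nat.lt_of_le_of_lt (Nat.sub_le _ _) k.isLt⟩) ∧
  y a ≠ x a ∧ y b ≠ x b

lemma canon_unique {x y : Fin n → Fin q} {a b a' b' : Fin n}
    (h1 : ∀ k : Fin n, k.val < a.val ∨ b.val < k.val → y k = x k)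
    (h2 : y a ≠ x a) (h3 : y b ≠ x b)
    (h1' : ∀ k : Fin n, k.val < a'.val ∨ b'.val < k.val → y k = x k)
    (h2' : y a' ≠ x a') (h3' : y b' ≠ x b') : a = a' ∧ b = b' := by
  constructor
  · refine Fin.ext ?_
    rcases Nat.lt_trichotomy a.val a'.val with h | h | h
    · exact absurd (h1' a (Or.inl h)) h2
    · exact h
    · exact absurd (h1 a' (Or.inl h)) h2'
  · refine Fin.ext ?_
    rcases Nat.lt_trichotomy b.val b'.val with h | h | h
    · exact absurd (h1 b' (Or.inr h)) h3'
    · exact h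
    · exact absurd (h1' b (Or.inr h)) h3

lemma canonL_unique {x y : Fin n → Fin q} {a b a' b' : Fin n}
    (h : CanonL x y a b) (h' : CanonL x y a' b') : a = a' ∧ b = b' :=
  canon_unique h.2.1 h.2.2.2.1 h.2.2.2.2 h'.2.1 h'.2.2.2.1 h'.2.2.2.2

lemma exists_canonL {x y : Fin n → Fin q} {a b : Fin n} {c : Fin q} (hab : a.val ≤ b.val)
    (hy : y = mkL x a b c) (hne : y ≠ x) : ∃ a' b', CanonL x y a' b' := by
  have hds : (Ds x y).Nonempty := by
    by_contra h
    rw [Finset.not_nonempty_iff_eq_empty] at h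
    apply hne
    funext k
    by_contra hk
    have : k ∈ Ds x y := mem_Ds.2 hk
    simp [h] at this
  set m := (Ds x y).min' hds with hm
  set M := (Ds x y).max' hds with hM
  have hmem : m ∈ Ds x y := Finset.min'_mem _ _
  have hMem : M ∈ Ds x y := Finset.max'_mem _ _
  have hbounds : ∀ k : Fin n, y k ≠ x k → a.val ≤ k.val ∧ k.val ≤ b.val := by
    intro k hk
    constructor
    · by_contra h
      exact hk (by rw [hy]; exact mkL_lt (by omega))
    · by_contra h
      exact hk (by rw [hy]; exact mkL_gt (by omega))
  have hma : a.val ≤ m.val := (hbounds m (mem_Ds.1 hmem)).1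
  have hMb : M.val ≤ b.val := (hbounds M (mem_Ds.1 hMem)).2
  have hout : ∀ k : Fin n, k.val < m.val ∨ M.val < k.val → y k = x k := by
    intro k hk
    by_contra h
    have hkd : k ∈ Ds x y := mem_Ds.2 h
    have h1 : m ≤ k := Finset.min'_le _ _ hkd
    have h2 : k ≤ M := Finset.le_max' _ _ hkd
    rw [Fin.le_def] at h1 h2
    omega
  refine ⟨m, M, ?_, hout, ?_, mem_Ds.1 hmem, mem_Ds.1 hMem⟩
  · have := Finset.min'_le _ _ hMem
    rw [← hm, Fin.le_def] at this
    exact this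
  · intro k hk1 hk2
    have h5 := mkL_mid (x := x) (a := a) (b := b) (c := c) (k := k) (by omega) (by omega)
    rw [← hy] at h5
    exact h5

lemma exists_canonR {x y : Fin n → Fin q} {a b : Fin n} {c : Fin q} (hab : a.val ≤ b.val)
    (hy : y = mkR x a b c) (hne : y ≠ x) : ∃ a' b', CanonR x y a' b' := by
  have hds : (Ds x y).Nonempty := by
    by_contra h
    rw [Finset.not_nonempty_iff_eq_empty] at h
    apply hne
    funext k
    by_contra hk
    have : k ∈ Ds x y := mem_Ds.2 hk
    simp [h] at this
  set m := (Ds x y).min' hds with hm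
  set M := (Ds x y).max' hds with hM
  have hmem : m ∈ Ds x y := Finset.min'_mem _ _
  have hMem : M ∈ Ds x y := Finset.max'_mem _ _
  have hbounds : ∀ k : Fin n, y k ≠ x k → a.val ≤ k.val ∧ k.val ≤ b.val := by
    intro k hk
    constructor
    · by_contra h
      exact hk (by rw [hy]; exact mkR_lt (by omega))
    · by_contra h
      exact hk (by rw [hy]; exact mkR_gt (by omega))
  have hma : a.val ≤ m.val := (hbounds m (mem_Ds.1 hmem)).1
  have hMb : M.val ≤ b.val := (hbounds M (mem_Ds.1 hMem)).2
  have hout : ∀ k : Fin n, k.val < m.val ∨ M.val < k.val → y k = x k := by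
    intro k hk
    by_contra h
    have hkd : k ∈ Ds x y := mem_Ds.2 h
    have h1 : m ≤ k := Finset.min'_le _ _ hkd
    have h2 : k ≤ M := Finset.le_max' _ _ hkd
    rw [Fin.le_def] at h1 h2
    omega
  refine ⟨m, M, ?_, hout, ?_, mem_Ds.1 hmem, mem_Ds.1 hMem⟩
  · have := Finset.min'_le _ _ hMem
    rw [← hm, Fin.le_def] at this
    exact this
  · intro k hk1 hk2
    have h5 := mkR_mid (x := x) (a := a) (b := b) (c := c) (k := k) (by omega) (by omega)
    rw [← hy] at h5
    exact h5

lemma mkL_of_canonL {x y : Fin n → Fin q} {a b : Fin n} (h : CanonL x y a b) :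
    y = mkL x a b (y b) := by
  obtain ⟨hab, hout, hin, hya, hyb⟩ := h
  funext k
  rcases Nat.lt_or_ge k.val a.val with h1 | h1
  · rw [mkL_lt h1]; exact hout k (Or.inl h1)
  rcases Nat.lt_or_ge k.val b.val with h2 | h2
  · rw [mkL_mid h1 h2]; exact hin k h1 h2
  rcases Nat.eq_or_lt_of_le h2 with h3 | h3
  · have : k = b := Fin.ext h3.symm
    subst this
    rw [mkL_last hab]
  · rw [mkL_gt h3]; exact hout k (Or.inr h3)

lemma mkR_of_canonR {x y : Fin n → Fin q} {a b : Fin n} (h : CanonR x y a b) :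
    y = mkR x a b (y a) := by
  obtain ⟨hab, hout, hin, hya, hyb⟩ := h
  funext k
  rcases Nat.lt_or_ge k.val a.val with h1 | h1
  · rw [mkR_lt h1]; exact hout k (Or.inl h1)
  rcases Nat.eq_or_lt_of_le h1 with h2 | h2
  · have : k = a := Fin.ext h2.symm
    subst this
    rw [mkR_first hab]
  rcases Nat.lt_or_ge b.val k.val with h3 | h3
  · rw [mkR_gt h3]; exact hout k (Or.inr h3)
  · rw [mkR_mid h2 h3]; exact hin k h2 h3

lemma canonL_mk {x : Fin n → Fin q} {a b : Fin n} {c : Fin q} (hab : a.val ≤ b.val)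
    (heq : a.val = b.val → c ≠ x a)
    (hlt : ∀ h : a.val < b.val, x ⟨a.val + 1, Nat.lt_of_le_of_lt h b.isLt⟩ ≠ x a ∧ c ≠ x b) :
    CanonL x (mkL x a b c) a b := by
  have hca : mkL x a b c b = c := mkL_last hab
  refine ⟨hab, fun k hk => ?_, fun k hk1 hk2 => mkL_mid hk1 hk2, ?_, ?_⟩
  · rcases hk with hk | hk
    · exact mkL_lt hk
    · exact mkL_gt hk
  · rcases Nat.eq_or_lt_of_le hab with h1 | h1
    · have hb : a = b := Fin.ext h1
      subst hb
      rw [hca]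
      exact heq h1
    · rw [mkL_mid (Nat.le_refl _) h1]
      exact (hlt h1).1
  · rw [hca]
    rcases Nat.eq_or_lt_of_le hab with h1 | h1
    · have hb : a = b := Fin.ext h1
      rw [← hb]
      exact heq h1
    · exact (hlt h1).2

lemma canonR_mk {x : Fin n → Fin q} {a b : Fin n} {c : Fin q} (hab : a.val ≤ b.val)
    (heq : a.val = b.val → c ≠ x a)
    (hlt : ∀ _ : a.val < b.val,
      x ⟨b.val - 1, Nat.lt_of_le_of_lt (Nat.sub_le _ _) b.isLt⟩ ≠ x b ∧ c ≠ x a) :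
    CanonR x (mkR x a b c) a b := by
  have hca : mkR x a b c a = c := mkR_first hab
  refine ⟨hab, fun k hk => ?_, fun k hk1 hk2 => mkR_mid hk1 hk2, ?_, ?_⟩
  · rcases hk with hk | hk
    · exact mkR_lt hk
    · exact mkR_gt hk
  · rw [hca]
    rcases Nat.eq_or_lt_of_le hab with h1 | h1
    · exact heq h1
    · exact (hlt h1).2
  · rcases Nat.eq_or_lt_of_le hab with h1 | h1
    · have hb : a = b := Fin.ext h1
      subst hb
      rw [hca]
      exact heq h1
    · rw [mkR_mid h1 (Nat.le_refl _)]
      exact (hlt h1).1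

noncomputable def FullL (x : Fin n → Fin q) : Finset (Fin n → Fin q) :=
  Finset.univ.filter fun y => ∃ a b : Fin n, a.val ≤ b.val ∧ ∃ c, y = mkL x a b c

noncomputable def FullR (x : Fin n → Fin q) : Finset (Fin n → Fin q) :=
  Finset.univ.filter fun y => ∃ a b : Fin n, a.val ≤ b.val ∧ ∃ c, y = mkR x a b c

lemma ball_eq_union (hn : 1 ≤ n) (x : Fin n → Fin q) :
    fllBall q n 1 x = FullL x ∪ FullR x := by
  ext y
  rw [Finset.mem_union, mem_fllBall_iff_mk hn, FullL, FullR, Finset.mem_filter,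
    Finset.mem_filter]
  simp only [Finset.mem_univ, true_and]
  constructor
  · rintro ⟨a, b, hab, (hc | hc)⟩
    · exact Or.inl ⟨a, b, hab, hc⟩
    · exact Or.inr ⟨a, b, hab, hc⟩
  · rintro (⟨a, b, hab, hc⟩ | ⟨a, b, hab, hc⟩)
    · exact ⟨a, b, hab, Or.inl hc⟩
    · exact ⟨a, b, hab, Or.inr hc⟩

lemma mkL_self (x : Fin n → Fin q) (a : Fin n) : mkL x a a (x a) = x := by
  funext k
  rcases Nat.lt_trichotomy k.val a.val with h | h | h
  · exact mkL_lt h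
  · have : k = a := Fin.ext h
    subst this
    exact mkL_last (Nat.le_refl _)
  · exact mkL_gt h

lemma mkL_eq_mkR_diag (x : Fin n → Fin q) (a : Fin n) (c : Fin q) :
    mkL x a a c = mkR x a a c := by
  funext k
  rcases Nat.lt_trichotomy k.val a.val with h | h | h
  · rw [mkL_lt h, mkR_lt h]
  · have : k = a := Fin.ext h
    subst this
    rw [mkL_last (Nat.le_refl _), mkR_first (Nat.le_refl _)]
  · rw [mkL_gt h, mkR_gt h]

lemma x_mem_FullL (hn : 1 ≤ n) (x : Fin n → Fin q) : x ∈ FullL x := by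
  rw [FullL, Finset.mem_filter]
  exact ⟨Finset.mem_univ _, ⟨0, hn⟩, ⟨0, hn⟩, Nat.le_refl _, x ⟨0, hn⟩, (mkL_self x _).symm⟩

lemma x_mem_FullR (hn : 1 ≤ n) (x : Fin n → Fin q) : x ∈ FullR x := by
  rw [FullR, Finset.mem_filter]
  refine ⟨Finset.mem_univ _, ⟨0, hn⟩, ⟨0, hn⟩, Nat.le_refl _, x ⟨0, hn⟩, ?_⟩
  rw [← mkL_eq_mkR_diag]
  exact (mkL_self x _).symm

noncomputable def Lc (x : Fin n → Fin q) : Finset (Fin n → Fin q) := (FullL x).erase x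
noncomputable def Rc (x : Fin n → Fin q) : Finset (Fin n → Fin q) := (FullR x).erase x

/-- the set of "adjacent-difference" positions -/
noncomputable def Dfin (x : Fin n → Fin q) : Finset (Fin n) :=
  Finset.univ.filter fun a : Fin n => ∃ h : a.val + 1 < n, x ⟨a.val + 1, h⟩ ≠ x a

noncomputable def paramL (x : Fin n → Fin q) : Finset (Fin n × Fin n) :=
  (Finset.univ ×ˢ Finset.univ).filter fun p =>
    p.1.val = p.2.val ∨ (p.1.val < p.2.val ∧ ∃ h : p.1.val + 1 < n, x ⟨p.1.val + 1, h⟩ ≠ x p.1)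

lemma canonL_of_paramL {x : Fin n → Fin q} {p : Fin n × Fin n} (hp : p ∈ paramL x)
    {c : Fin q} (hc : c ≠ x p.2) : CanonL x (mkL x p.1 p.2 c) p.1 p.2 := by
  rw [paramL, Finset.mem_filter] at hp
  rcases hp.2 with h | ⟨h1, h2, h3⟩
  · refine canonL_mk (Nat.le_of_eq h) (fun _ => ?_) (fun hlt => by omega)
    have : p.1 = p.2 := Fin.ext h
    rwa [this]
  · refine canonL_mk (Nat.le_of_lt h1) (fun he => by omega) (fun hlt => ⟨?_, hc⟩)
    exact h3

lemma ne_of_canonL {x y : Fin n → Fin q} {a b : Fin n} (h : CanonL x y a b) : y ≠ x := by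
  intro he
  exact h.2.2.2.1 (by rw [he])

lemma ne_of_canonR {x y : Fin n → Fin q} {a b : Fin n} (h : CanonR x y a b) : y ≠ x := by
  intro he
  exact h.2.2.2.1 (by rw [he])

lemma Lc_eq (x : Fin n → Fin q) :
    Lc x = (paramL x).biUnion fun p =>
      (Finset.univ.erase (x p.2)).image fun c => mkL x p.1 p.2 c := by
  ext y
  rw [Lc, Finset.mem_erase, Finset.mem_biUnion]
  constructor
  · rintro ⟨hne, hy⟩
    rw [FullL, Finset.mem_filter] at hy
    obtain ⟨-, a, b, hab, c, hc⟩ := hy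
    obtain ⟨a', b', hcan⟩ := exists_canonL hab hc hne
    obtain ⟨hab', hout, hin, hya, hyb⟩ := hcan
    refine ⟨(a', b'), ?_, ?_⟩
    · rw [paramL, Finset.mem_filter]
      refine ⟨by simp, ?_⟩
      rcases Nat.eq_or_lt_of_le hab' with h1 | h1
      · exact Or.inl h1
      · refine Or.inr ⟨h1, Nat.lt_of_le_of_lt h1 b'.isLt, ?_⟩
        have := hin a' (Nat.le_refl _) h1
        rw [this] at hya
        exact hya
    · rw [Finset.mem_image]
      exact ⟨y b', Finset.mem_erase.2 ⟨hyb, Finset.mem_univ _⟩,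
        (mkL_of_canonL ⟨hab', hout, hin, hya, hyb⟩).symm⟩
  · rintro ⟨p, hp, hy⟩
    rw [Finset.mem_image] at hy
    obtain ⟨c, hc, rfl⟩ := hy
    rw [Finset.mem_erase] at hc
    have hcan := canonL_of_paramL hp hc.1
    refine ⟨ne_of_canonL hcan, ?_⟩
    rw [FullL, Finset.mem_filter]
    exact ⟨Finset.mem_univ _, p.1, p.2, hcan.1, c, rfl⟩

lemma card_Lc (x : Fin n → Fin q) : (Lc x).card = (paramL x).card * (q - 1) := by
  rw [Lc_eq]
  rw [Finset.card_biUnion]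
  · have : ∀ p ∈ paramL x,
        ((Finset.univ.erase (x p.2)).image fun c => mkL x p.1 p.2 c).card = q - 1 := by
      intro p hp
      rw [Finset.card_image_of_injOn, Finset.card_erase_of_mem (Finset.mem_univ _),
        Finset.card_univ, Fintype.card_fin]
      intro c hc c' hc' he
      have he' : mkL x p.1 p.2 c = mkL x p.1 p.2 c' := he
      have h1 : p.1.val ≤ p.2.val := by
        rw [paramL, Finset.mem_filter] at hp
        rcases hp.2 with h | h
        · omega
        · omega
      have e1 : mkL x p.1 p.2 c p.2 = c := mkL_last h1
      have e2 : mkL x p.1 p.2 c' p.2 = c' := mkL_last h1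
      rw [← e1, ← e2, he']
    rw [Finset.sum_congr rfl this, Finset.sum_const, smul_eq_mul]
  · intro p hp p' hp' hne
    simp only [Function.onFun, Finset.disjoint_left]
    intro y hy hy'
    rw [Finset.mem_image] at hy hy'
    obtain ⟨c, hc, hyc⟩ := hy
    obtain ⟨c', hc', hyc'⟩ := hy'
    rw [Finset.mem_erase] at hc hc'
    have k1 := canonL_of_paramL hp hc.1
    have k2 := canonL_of_paramL hp' hc'.1
    rw [hyc] at k1
    rw [hyc'] at k2
    obtain ⟨e1, e2⟩ := canonL_unique k1 k2
    exact hne (Prod.ext e1 e2)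

noncomputable def paramR (x : Fin n → Fin q) : Finset (Fin n × Fin n) :=
  (Finset.univ ×ˢ Finset.univ).filter fun p =>
    p.1.val = p.2.val ∨ (p.1.val < p.2.val ∧
      x ⟨p.2.val - 1, Nat.lt_of_le_of_lt (Nat.sub_le _ _) p.2.isLt⟩ ≠ x p.2)

lemma canonR_of_paramR {x : Fin n → Fin q} {p : Fin n × Fin n} (hp : p ∈ paramR x)
    {c : Fin q} (hc : c ≠ x p.1) : CanonR x (mkR x p.1 p.2 c) p.1 p.2 := by
  rw [paramR, Finset.mem_filter] at hp
  rcases hp.2 with h | ⟨h1, h2⟩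
  · refine canonR_mk (Nat.le_of_eq h) (fun _ => hc) (fun hlt => by omega)
  · exact canonR_mk (Nat.le_of_lt h1) (fun he => by omega) (fun hlt => ⟨h2, hc⟩)

lemma Rc_eq (x : Fin n → Fin q) :
    Rc x = (paramR x).biUnion fun p =>
      (Finset.univ.erase (x p.1)).image fun c => mkR x p.1 p.2 c := by
  ext y
  rw [Rc, Finset.mem_erase, Finset.mem_biUnion]
  constructor
  · rintro ⟨hne, hy⟩
    rw [FullR, Finset.mem_filter] at hy
    obtain ⟨-, a, b, hab, c, hc⟩ := hy
    obtain ⟨a', b', hcan⟩ := exists_canonR hab hc hne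
    obtain ⟨hab', hout, hin, hya, hyb⟩ := hcan
    refine ⟨(a', b'), ?_, ?_⟩
    · rw [paramR, Finset.mem_filter]
      refine ⟨by simp, ?_⟩
      rcases Nat.eq_or_lt_of_le hab' with h1 | h1
      · exact Or.inl h1
      · refine Or.inr ⟨h1, ?_⟩
        have := hin b' h1 (Nat.le_refl _)
        rw [this] at hyb
        exact hyb
    · rw [Finset.mem_image]
      exact ⟨y a', Finset.mem_erase.2 ⟨hya, Finset.mem_univ _⟩,
        (mkR_of_canonR ⟨hab', hout, hin, hya, hyb⟩).symm⟩
  · rintro ⟨p, hp, hy⟩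
    rw [Finset.mem_image] at hy
    obtain ⟨c, hc, rfl⟩ := hy
    rw [Finset.mem_erase] at hc
    have hcan := canonR_of_paramR hp hc.1
    refine ⟨ne_of_canonR hcan, ?_⟩
    rw [FullR, Finset.mem_filter]
    exact ⟨Finset.mem_univ _, p.1, p.2, hcan.1, c, rfl⟩

lemma canonR_unique {x y : Fin n → Fin q} {a b a' b' : Fin n}
    (h : CanonR x y a b) (h' : CanonR x y a' b') : a = a' ∧ b = b' :=
  canon_unique h.2.1 h.2.2.2.1 h.2.2.2.2 h'.2.1 h'.2.2.2.1 h'.2.2.2.2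

lemma card_Rc (x : Fin n → Fin q) : (Rc x).card = (paramR x).card * (q - 1) := by
  rw [Rc_eq]
  rw [Finset.card_biUnion]
  · have : ∀ p ∈ paramR x,
        ((Finset.univ.erase (x p.1)).image fun c => mkR x p.1 p.2 c).card = q - 1 := by
      intro p hp
      rw [Finset.card_image_of_injOn, Finset.card_erase_of_mem (Finset.mem_univ _),
        Finset.card_univ, Fintype.card_fin]
      intro c hc c' hc' he
      have he' : mkR x p.1 p.2 c = mkR x p.1 p.2 c' := he
      have h1 : p.1.val ≤ p.2.val := by
        rw [paramR, Finset.mem_filter] at hp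
        rcases hp.2 with h | h
        · omega
        · omega
      have e1 : mkR x p.1 p.2 c p.1 = c := mkR_first h1
      have e2 : mkR x p.1 p.2 c' p.1 = c' := mkR_first h1
      rw [← e1, ← e2, he']
    rw [Finset.sum_congr rfl this, Finset.sum_const, smul_eq_mul]
  · intro p hp p' hp' hne
    simp only [Function.onFun, Finset.disjoint_left]
    intro y hy hy'
    rw [Finset.mem_image] at hy hy'
    obtain ⟨c, hc, hyc⟩ := hy
    obtain ⟨c', hc', hyc'⟩ := hy'
    rw [Finset.mem_erase] at hc hc'
    have k1 := canonR_of_paramR hp hc.1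
    have k2 := canonR_of_paramR hp' hc'.1
    rw [hyc] at k1
    rw [hyc'] at k2
    obtain ⟨e1, e2⟩ := canonR_unique k1 k2
    exact hne (Prod.ext e1 e2)

noncomputable def diagP (n : ℕ) : Finset (Fin n × Fin n) :=
  Finset.univ.image fun a : Fin n => (a, a)

lemma x_congr {x : Fin n → Fin q} {i j : Fin n} (h : i.val = j.val) : x i = x j :=
  congrArg x (Fin.ext h)

lemma mem_diagP {p : Fin n × Fin n} : p ∈ diagP n ↔ p.1 = p.2 := by
  rw [diagP, Finset.mem_image]
  constructor
  · rintro ⟨a, -, rfl⟩; rfl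
  · intro h
    exact ⟨p.1, Finset.mem_univ _, by rw [Prod.ext_iff]; exact ⟨rfl, h⟩⟩

lemma card_diagP : (diagP n).card = n := by
  rw [diagP, Finset.card_image_of_injective _ fun a a' h => (Prod.ext_iff.1 h).1,
    Finset.card_univ, Fintype.card_fin]

noncomputable def offL (x : Fin n → Fin q) : Finset (Fin n × Fin n) :=
  (Finset.univ ×ˢ Finset.univ).filter fun p =>
    p.1.val < p.2.val ∧ ∃ h : p.1.val + 1 < n, x ⟨p.1.val + 1, h⟩ ≠ x p.1

noncomputable def offR (x : Fin n → Fin q) : Finset (Fin n × Fin n) :=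
  (Finset.univ ×ˢ Finset.univ).filter fun p =>
    p.1.val < p.2.val ∧
      x ⟨p.2.val - 1, Nat.lt_of_le_of_lt (Nat.sub_le _ _) p.2.isLt⟩ ≠ x p.2

noncomputable def Dfin' (x : Fin n → Fin q) : Finset (Fin n) :=
  Finset.univ.filter fun b : Fin n =>
    0 < b.val ∧ x ⟨b.val - 1, Nat.lt_of_le_of_lt (Nat.sub_le _ _) b.isLt⟩ ≠ x b

lemma paramL_card (x : Fin n → Fin q) :
    (paramL x).card = n + ∑ a ∈ Dfin x, (n - 1 - a.val) := by
  have hsplit : paramL x = diagP n ∪ offL x := by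
    ext p
    rw [paramL, offL, Finset.mem_union, Finset.mem_filter, Finset.mem_filter, mem_diagP]
    constructor
    · rintro ⟨hu, h | h⟩
      · exact Or.inl (Fin.ext h)
      · exact Or.inr ⟨hu, h⟩
    · rintro (h | ⟨hu, h⟩)
      · exact ⟨by simp, Or.inl (congrArg Fin.val h)⟩
      · exact ⟨hu, Or.inr h⟩
  have hdisj : Disjoint (diagP n) (offL x) := by
    rw [Finset.disjoint_left]
    intro p hp hp'
    rw [mem_diagP] at hp
    rw [offL, Finset.mem_filter] at hp'
    have := congrArg Fin.val hp
    omega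
  have hoff : offL x = (Dfin x).biUnion fun a => (Finset.Ioi a).image fun b => (a, b) := by
    ext p
    rw [offL, Finset.mem_filter, Finset.mem_biUnion]
    constructor
    · rintro ⟨-, h1, h2⟩
      refine ⟨p.1, by rw [Dfin, Finset.mem_filter]; exact ⟨Finset.mem_univ _, h2⟩, ?_⟩
      rw [Finset.mem_image]
      exact ⟨p.2, Finset.mem_Ioi.2 (by rw [Fin.lt_def]; exact h1), by
        rw [Prod.ext_iff]; exact ⟨rfl, rfl⟩⟩
    · rintro ⟨a, ha, hb⟩
      rw [Finset.mem_image] at hb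
      obtain ⟨b, hb, rfl⟩ := hb
      rw [Finset.mem_Ioi, Fin.lt_def] at hb
      rw [Dfin, Finset.mem_filter] at ha
      exact ⟨by simp, hb, ha.2⟩
  rw [hsplit, Finset.card_union_of_disjoint hdisj, card_diagP, hoff, Finset.card_biUnion]
  · congr 1
    refine Finset.sum_congr rfl fun a _ => ?_
    rw [Finset.card_image_of_injective _ fun b b' h => (Prod.ext_iff.1 h).2,
      Fin.card_Ioi]
  · intro a ha a' ha' hne
    simp only [Function.onFun, Finset.disjoint_left]
    intro p hp hp'
    rw [Finset.mem_image] at hp hp'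
    obtain ⟨b, -, rfl⟩ := hp
    obtain ⟨b', -, h⟩ := hp'
    have : a' = a := congrArg Prod.fst h
    exact hne this.symm

lemma paramR_card (x : Fin n → Fin q) :
    (paramR x).card = n + ∑ b ∈ Dfin' x, b.val := by
  have hsplit : paramR x = diagP n ∪ offR x := by
    ext p
    rw [paramR, offR, Finset.mem_union, Finset.mem_filter, Finset.mem_filter, mem_diagP]
    constructor
    · rintro ⟨hu, h | h⟩
      · exact Or.inl (Fin.ext h)
      · exact Or.inr ⟨hu, h⟩
    · rintro (h | ⟨hu, h⟩)
      · exact ⟨by simp, Or.inl (congrArg Fin.val h)⟩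
      · exact ⟨hu, Or.inr h⟩
  have hdisj : Disjoint (diagP n) (offR x) := by
    rw [Finset.disjoint_left]
    intro p hp hp'
    rw [mem_diagP] at hp
    rw [offR, Finset.mem_filter] at hp'
    have := congrArg Fin.val hp
    omega
  have hoff : offR x = (Dfin' x).biUnion fun b => (Finset.Iio b).image fun a => (a, b) := by
    ext p
    rw [offR, Finset.mem_filter, Finset.mem_biUnion]
    constructor
    · rintro ⟨-, h1, h2⟩
      have hmem : p.2 ∈ Dfin' x := by
        rw [Dfin', Finset.mem_filter]
        exact ⟨Finset.mem_univ _, by omega, h2⟩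
      refine ⟨p.2, hmem, ?_⟩
      rw [Finset.mem_image]
      exact ⟨p.1, Finset.mem_Iio.2 (by rw [Fin.lt_def]; exact h1), by
        rw [Prod.ext_iff]; exact ⟨rfl, rfl⟩⟩
    · rintro ⟨b, hb, ha⟩
      rw [Finset.mem_image] at ha
      obtain ⟨a, ha, rfl⟩ := ha
      rw [Finset.mem_Iio, Fin.lt_def] at ha
      rw [Dfin', Finset.mem_filter] at hb
      exact ⟨by simp, ha, hb.2.2⟩
  rw [hsplit, Finset.card_union_of_disjoint hdisj, card_diagP, hoff, Finset.card_biUnion]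
  · congr 1
    refine Finset.sum_congr rfl fun b _ => ?_
    rw [Finset.card_image_of_injective _ fun a a' h => (Prod.ext_iff.1 h).1,
      Fin.card_Iio]
  · intro b hb b' hb' hne
    simp only [Function.onFun, Finset.disjoint_left]
    intro p hp hp'
    rw [Finset.mem_image] at hp hp'
    obtain ⟨a, -, rfl⟩ := hp
    obtain ⟨a', -, h⟩ := hp'
    have : b' = b := congrArg Prod.snd h
    exact hne this.symm

lemma Dfin'_eq (x : Fin n → Fin q) :
    Dfin' x = (Dfin x).image fun a : Fin n =>
      if h : a.val + 1 < n then (⟨a.val + 1, h⟩ : Fin n) else a := by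
  ext b
  rw [Dfin', Finset.mem_filter, Finset.mem_image]
  constructor
  · rintro ⟨-, hb0, hbx⟩
    have hlt : b.val - 1 + 1 < n := by omega
    refine ⟨⟨b.val - 1, Nat.lt_of_le_of_lt (Nat.sub_le _ _) b.isLt⟩, ?_, ?_⟩
    · rw [Dfin, Finset.mem_filter]
      refine ⟨Finset.mem_univ _, hlt, ?_⟩
      intro hh
      exact hbx ((x_congr (show b.val - 1 + 1 = b.val by omega)).symm.trans hh).symm
    · rw [dif_pos hlt]
      exact Fin.ext (show b.val - 1 + 1 = b.val by omega)
  · rintro ⟨a, ha, rfl⟩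
    rw [Dfin, Finset.mem_filter] at ha
    obtain ⟨-, h, hne⟩ := ha
    rw [dif_pos h]
    refine ⟨Finset.mem_univ _, Nat.succ_pos _, ?_⟩
    intro hh
    exact hne ((x_congr (show a.val + 1 - 1 = a.val by omega)).symm.trans hh).symm

lemma sum_Dfin' (x : Fin n → Fin q) :
    ∑ b ∈ Dfin' x, b.val = ∑ a ∈ Dfin x, (a.val + 1) := by
  rw [Dfin'_eq, Finset.sum_image]
  · refine Finset.sum_congr rfl fun a ha => ?_
    rw [Dfin, Finset.mem_filter] at ha
    obtain ⟨-, h, -⟩ := ha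
    rw [dif_pos h]
  · intro a ha a' ha' he
    rw [Dfin, Finset.mem_coe, Finset.mem_filter] at ha ha'
    obtain ⟨-, h, -⟩ := ha
    obtain ⟨-, h', -⟩ := ha'
    beta_reduce at he
    rw [dif_pos h, dif_pos h'] at he
    exact Fin.ext (by have := congrArg Fin.val he; simpa using this)

lemma card_paramL_add_paramR (x : Fin n → Fin q) :
    (paramL x).card + (paramR x).card = 2 * n + (Dfin x).card * n := by
  rw [paramL_card, paramR_card, sum_Dfin']
  have : ∑ a ∈ Dfin x, (n - 1 - a.val) + ∑ a ∈ Dfin x, (a.val + 1)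
      = (Dfin x).card * n := by
    rw [← Finset.sum_add_distrib]
    rw [Finset.sum_congr rfl (fun a ha => ?_), Finset.sum_const, smul_eq_mul]
    rw [Dfin, Finset.mem_filter] at ha
    obtain ⟨-, h, -⟩ := ha
    omega
  omega

noncomputable def paramI (x : Fin n → Fin q) : Finset (Fin n × Fin n) :=
  (Finset.univ ×ˢ Finset.univ).filter fun p =>
    p.1.val < p.2.val ∧ (∃ h : p.1.val + 1 < n, x ⟨p.1.val + 1, h⟩ ≠ x p.1) ∧
    x ⟨p.2.val - 1, Nat.lt_of_le_of_lt (Nat.sub_le _ _) p.2.isLt⟩ ≠ x p.2 ∧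
    ∀ k : Fin n, p.1.val < k.val → ∀ h2 : k.val < p.2.val,
      x ⟨k.val - 1, Nat.lt_of_le_of_lt (Nat.sub_le _ _) k.isLt⟩
        = x ⟨k.val + 1, Nat.lt_of_le_of_lt h2 p.2.isLt⟩

noncomputable def diagI (x : Fin n → Fin q) : Finset (Fin n → Fin q) :=
  Finset.univ.biUnion fun a : Fin n =>
    (Finset.univ.erase (x a)).image fun c => mkL x a a c

noncomputable def swapI (x : Fin n → Fin q) : Finset (Fin n → Fin q) :=
  (paramI x).image fun p =>
    mkL x p.1 p.2 (x ⟨p.2.val - 1, Nat.lt_of_le_of_lt (Nat.sub_le _ _) p.2.isLt⟩)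

lemma canonL_diag {x : Fin n → Fin q} {a : Fin n} {c : Fin q} (hc : c ≠ x a) :
    CanonL x (mkL x a a c) a a :=
  canonL_mk (Nat.le_refl _) (fun _ => hc) (fun h => absurd h (Nat.lt_irrefl _))

lemma canonR_diag {x : Fin n → Fin q} {a : Fin n} {c : Fin q} (hc : c ≠ x a) :
    CanonR x (mkR x a a c) a a :=
  canonR_mk (Nat.le_refl _) (fun _ => hc) (fun h => absurd h (Nat.lt_irrefl _))

lemma canonL_swap {x : Fin n → Fin q} {p : Fin n × Fin n} (hp : p ∈ paramI x) :
    CanonL x (mkL x p.1 p.2 (x ⟨p.2.val - 1, Nat.lt_of_le_of_lt (Nat.sub_le _ _) p.2.isLt⟩))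
      p.1 p.2 := by
  rw [paramI, Finset.mem_filter] at hp
  obtain ⟨-, h1, ⟨h2, h3⟩, h4, h5⟩ := hp
  exact canonL_mk (Nat.le_of_lt h1) (fun he => by omega) (fun hlt => ⟨h3, h4⟩)

lemma canonR_swap {x : Fin n → Fin q} {p : Fin n × Fin n} (hp : p ∈ paramI x) :
    CanonR x (mkL x p.1 p.2 (x ⟨p.2.val - 1, Nat.lt_of_le_of_lt (Nat.sub_le _ _) p.2.isLt⟩))
      p.1 p.2 := by
  have hpI := hp
  rw [paramI, Finset.mem_filter] at hp
  obtain ⟨-, h1, ⟨h2, h3⟩, h4, h5⟩ := hp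
  set c0 := x ⟨p.2.val - 1, Nat.lt_of_le_of_lt (Nat.sub_le _ _) p.2.isLt⟩ with hc0
  have hlast : mkL x p.1 p.2 c0 p.2 = c0 := mkL_last (Nat.le_of_lt h1)
  refine ⟨Nat.le_of_lt h1, fun k hk => ?_, fun k hk1 hk2 => ?_, ?_, ?_⟩
  · rcases hk with hk | hk
    · exact mkL_lt hk
    · exact mkL_gt hk
  · rcases Nat.eq_or_lt_of_le hk2 with he | he
    · have : k = p.2 := Fin.ext he
      subst this
      rw [hlast]
    · rw [mkL_mid (Nat.le_of_lt hk1) he]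
      exact (h5 k hk1 he).symm
  · rw [mkL_mid (Nat.le_refl _) h1]
    exact h3
  · rw [hlast]
    exact h4

lemma inter_eq (x : Fin n → Fin q) : Lc x ∩ Rc x = diagI x ∪ swapI x := by
  ext y
  rw [Finset.mem_inter, Finset.mem_union]
  constructor
  · rintro ⟨hyL, hyR⟩
    rw [Lc, Finset.mem_erase, FullL, Finset.mem_filter] at hyL
    rw [Rc, Finset.mem_erase, FullR, Finset.mem_filter] at hyR
    obtain ⟨hne, -, a, b, hab, c, hc⟩ := hyL
    obtain ⟨-, -, a', b', hab', c', hc'⟩ := hyR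
    obtain ⟨m, M, hcanL⟩ := exists_canonL hab hc hne
    obtain ⟨m', M', hcanR⟩ := exists_canonR hab' hc' hne
    obtain ⟨rfl, rfl⟩ := canon_unique hcanL.2.1 hcanL.2.2.2.1 hcanL.2.2.2.2
      hcanR.2.1 hcanR.2.2.2.1 hcanR.2.2.2.2
    obtain ⟨hmM, houtL, hinL, hym, hyM⟩ := hcanL
    obtain ⟨-, houtR, hinR, -, -⟩ := hcanR
    rcases Nat.eq_or_lt_of_le hmM with he | he
    · left
      have : m = M := Fin.ext he
      subst this
      rw [diagI, Finset.mem_biUnion]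
      refine ⟨m, Finset.mem_univ _, ?_⟩
      rw [Finset.mem_image]
      exact ⟨y m, Finset.mem_erase.2 ⟨hym, Finset.mem_univ _⟩,
        (mkL_of_canonL ⟨hmM, houtL, hinL, hym, hyM⟩).symm⟩
    · right
      rw [swapI, Finset.mem_image]
      have hyMval : y M = x ⟨M.val - 1, Nat.lt_of_le_of_lt (Nat.sub_le _ _) M.isLt⟩ :=
        hinR M he (Nat.le_refl _)
      refine ⟨(m, M), ?_, ?_⟩
      · rw [paramI, Finset.mem_filter]
        refine ⟨by simp, he, ⟨Nat.lt_of_le_of_lt he M.isLt, ?_⟩, ?_, ?_⟩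
        · have := hinL m (Nat.le_refl _) he
          rw [this] at hym
          exact hym
        · rw [← hyMval]
          exact hyM
        · intro k hk1 hk2
          have e1 := hinR k hk1 (Nat.le_of_lt hk2)
          have e2 := hinL k (Nat.le_of_lt hk1) hk2
          rw [e1] at e2
          exact e2
      · rw [← hyMval]
        exact (mkL_of_canonL ⟨hmM, houtL, hinL, hym, hyM⟩).symm
  · rintro (hy | hy)
    · rw [diagI, Finset.mem_biUnion] at hy
      obtain ⟨a, -, hy⟩ := hy
      rw [Finset.mem_image] at hy
      obtain ⟨c, hc, rfl⟩ := hy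
      rw [Finset.mem_erase] at hc
      have kL := canonL_diag (x := x) (a := a) hc.1
      have kR : CanonR x (mkL x a a c) a a := by
        rw [mkL_eq_mkR_diag]
        exact canonR_diag hc.1
      constructor
      · rw [Lc, Finset.mem_erase]
        refine ⟨ne_of_canonL kL, ?_⟩
        rw [FullL, Finset.mem_filter]
        exact ⟨Finset.mem_univ _, a, a, Nat.le_refl _, c, rfl⟩
      · rw [Rc, Finset.mem_erase]
        refine ⟨ne_of_canonR kR, ?_⟩
        rw [FullR, Finset.mem_filter]
        exact ⟨Finset.mem_univ _, a, a, Nat.le_refl _, c, mkL_eq_mkR_diag x a c⟩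
    · rw [swapI, Finset.mem_image] at hy
      obtain ⟨p, hp, rfl⟩ := hy
      have kL := canonL_swap hp
      have kR := canonR_swap hp
      constructor
      · rw [Lc, Finset.mem_erase]
        refine ⟨ne_of_canonL kL, ?_⟩
        rw [FullL, Finset.mem_filter]
        exact ⟨Finset.mem_univ _, p.1, p.2, kL.1, _, rfl⟩
      · rw [Rc, Finset.mem_erase]
        refine ⟨ne_of_canonR kR, ?_⟩
        rw [FullR, Finset.mem_filter]
        exact ⟨Finset.mem_univ _, p.1, p.2, kR.1, _, mkR_of_canonR kR⟩

lemma card_inter_LR (x : Fin n → Fin q) :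
    (Lc x ∩ Rc x).card = n * (q - 1) + (paramI x).card := by
  rw [inter_eq]
  have hdisj : Disjoint (diagI x) (swapI x) := by
    rw [Finset.disjoint_left]
    intro y hy hy'
    rw [diagI, Finset.mem_biUnion] at hy
    obtain ⟨a, -, hy⟩ := hy
    rw [Finset.mem_image] at hy
    obtain ⟨c, hc, hyc⟩ := hy
    rw [Finset.mem_erase] at hc
    rw [swapI, Finset.mem_image] at hy'
    obtain ⟨p, hp, hyp⟩ := hy'
    have k1 := canonL_diag (x := x) (a := a) hc.1
    have k2 := canonL_swap hp
    rw [hyc] at k1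
    rw [hyp] at k2
    obtain ⟨e1, e2⟩ := canonL_unique k1 k2
    rw [paramI, Finset.mem_filter] at hp
    have := hp.2.1
    rw [← e1, ← e2] at this
    omega
  rw [Finset.card_union_of_disjoint hdisj]
  congr 1
  · rw [diagI, Finset.card_biUnion]
    · have : ∀ a : Fin n, ((Finset.univ.erase (x a)).image fun c => mkL x a a c).card
          = q - 1 := by
        intro a
        rw [Finset.card_image_of_injOn, Finset.card_erase_of_mem (Finset.mem_univ _),
          Finset.card_univ, Fintype.card_fin]
        intro c hc c' hc' he
        have he' : mkL x a a c = mkL x a a c' := he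
        have e1 : mkL x a a c a = c := mkL_last (Nat.le_refl _)
        have e2 : mkL x a a c' a = c' := mkL_last (Nat.le_refl _)
        rw [← e1, ← e2, he']
      rw [Finset.sum_congr rfl fun a _ => this a, Finset.sum_const, smul_eq_mul,
        Finset.card_univ, Fintype.card_fin]
    · intro a ha a' ha' hne
      simp only [Function.onFun, Finset.disjoint_left]
      intro y hy hy'
      rw [Finset.mem_image] at hy hy'
      obtain ⟨c, hc, hyc⟩ := hy
      obtain ⟨c', hc', hyc'⟩ := hy'
      rw [Finset.mem_erase] at hc hc'
      have k1 := canonL_diag (x := x) (a := a) hc.1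
      have k2 := canonL_diag (x := x) (a := a') hc'.1
      rw [hyc] at k1
      rw [hyc'] at k2
      exact hne (canonL_unique k1 k2).1
  · rw [swapI, Finset.card_image_of_injOn]
    intro p hp p' hp' he
    rw [Finset.mem_coe] at hp hp'
    have k1 := canonL_swap hp
    have k2 := canonL_swap hp'
    have he' : mkL x p.1 p.2 _ = mkL x p'.1 p'.2 _ := he
    rw [he'] at k1
    obtain ⟨e1, e2⟩ := canonL_unique k1 k2
    exact Prod.ext e1 e2

lemma master_count (hn : 1 ≤ n) (x : Fin n → Fin q) :
    (fllBall q n 1 x).card + n * (q - 1) + (paramI x).card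
      = (2 * n + (Dfin x).card * n) * (q - 1) + 1 := by
  have h1 := Finset.card_union_add_card_inter (FullL x) (FullR x)
  rw [← ball_eq_union hn] at h1
  have hFL : (FullL x).card = (paramL x).card * (q - 1) + 1 := by
    have : (Lc x).card + 1 = (FullL x).card :=
      Finset.card_erase_add_one (x_mem_FullL hn x)
    rw [← this, card_Lc]
  have hFR : (FullR x).card = (paramR x).card * (q - 1) + 1 := by
    have : (Rc x).card + 1 = (FullR x).card :=
      Finset.card_erase_add_one (x_mem_FullR hn x)
    rw [← this, card_Rc]
  have hI : (FullL x ∩ FullR x).card = (Lc x ∩ Rc x).card + 1 := by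
    have he : FullL x ∩ FullR x = insert x (Lc x ∩ Rc x) := by
      ext y
      rw [Finset.mem_inter, Finset.mem_insert, Finset.mem_inter, Lc, Rc,
        Finset.mem_erase, Finset.mem_erase]
      by_cases hy : y = x
      · simp [hy, x_mem_FullL hn x, x_mem_FullR hn x]
      · simp [hy]
    rw [he, Finset.card_insert_of_notMem]
    rw [Finset.mem_inter, Lc, Finset.mem_erase]
    intro h
    exact h.1.1 rfl
  have hsum : ((paramL x).card + (paramR x).card) * (q - 1)
      = (2 * n + (Dfin x).card * n) * (q - 1) := by
    rw [card_paramL_add_paramR]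
  rw [hFL, hFR, hI, card_inter_LR] at h1
  have hdist := Nat.add_mul (paramL x).card (paramR x).card (q - 1)
  omega

noncomputable def adjI (x : Fin n → Fin q) : Finset (Fin n × Fin n) :=
  (Dfin x).image fun a => (a, if h : a.val + 1 < n then (⟨a.val + 1, h⟩ : Fin n) else a)

lemma adjI_subset (x : Fin n → Fin q) : adjI x ⊆ paramI x := by
  intro p hp
  rw [adjI, Finset.mem_image] at hp
  obtain ⟨a, ha, rfl⟩ := hp
  rw [Dfin, Finset.mem_filter] at ha
  obtain ⟨-, h, hne⟩ := ha
  rw [dif_pos h]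
  rw [paramI, Finset.mem_filter]
  refine ⟨by simp, Nat.lt_succ_self _, ⟨h, hne⟩, ?_, ?_⟩
  · intro hh
    exact hne ((x_congr (show a.val + 1 - 1 = a.val by omega)).symm.trans hh).symm
  · intro k hk1 hk2
    have hk1' : a.val < k.val := hk1
    have hk2' : k.val < a.val + 1 := hk2
    omega

lemma card_adjI (x : Fin n → Fin q) : (adjI x).card = (Dfin x).card := by
  rw [adjI, Finset.card_image_of_injOn]
  intro a _ a' _ he
  exact congrArg Prod.fst he

lemma paramI_lower (x : Fin n → Fin q) : (Dfin x).card ≤ (paramI x).card := by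
  rw [← card_adjI x]
  exact Finset.card_le_card (adjI_subset x)

lemma paramI_subset_adjI (x : Fin n → Fin q)
    (h2 : ∀ i : ℕ, ∀ h : i + 2 < n, x ⟨i, Nat.lt_of_le_of_lt (Nat.le_add_right i _) h⟩ ≠ x ⟨i + 2, h⟩) :
    paramI x ⊆ adjI x := by
  intro p hp
  rw [paramI, Finset.mem_filter] at hp
  obtain ⟨-, hlt, ⟨hs, hne⟩, hc2, hint⟩ := hp
  rcases Nat.eq_or_lt_of_le hlt with he | he
  · -- p.2.val = p.1.val + 1
    rw [adjI, Finset.mem_image]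
    refine ⟨p.1, ?_, ?_⟩
    · rw [Dfin, Finset.mem_filter]
      exact ⟨Finset.mem_univ _, hs, hne⟩
    · rw [dif_pos hs]
      exact Prod.ext rfl (Fin.ext he)
  · -- p.2.val ≥ p.1.val + 2 : contradiction with h2
    exfalso
    have hk2 : p.1.val + 1 < p.2.val := he
    have hintk := hint ⟨p.1.val + 1, hs⟩ (Nat.lt_succ_self _) hk2
    have hp2n : p.1.val + 2 < n := Nat.lt_of_le_of_lt hk2 p.2.isLt
    exact h2 p.1.val hp2n
      ((x_congr (show p.1.val = p.1.val + 1 - 1 by omega)).trans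
        (hintk.trans (x_congr (show p.1.val + 1 + 1 = p.1.val + 2 by omega))))

lemma paramI_extra (x : Fin n → Fin q)
    (h1 : ∀ i : ℕ, ∀ h : i + 1 < n, x ⟨i, Nat.lt_of_le_of_lt (Nat.le_add_right i _) h⟩ ≠ x ⟨i + 1, h⟩)
    {i : ℕ} (hi : i + 2 < n) (hbad : x ⟨i, Nat.lt_of_le_of_lt (Nat.le_add_right i _) hi⟩ = x ⟨i + 2, hi⟩) :
    (Dfin x).card + 1 ≤ (paramI x).card := by
  have hmem : ((⟨i, by omega⟩, ⟨i + 2, hi⟩) : Fin n × Fin n) ∈ paramI x := by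
    rw [paramI, Finset.mem_filter]
    refine ⟨by simp, show i < i + 2 by omega, ⟨show i + 1 < n by omega, ?_⟩, ?_, ?_⟩
    · exact fun hh => h1 i (by omega) hh.symm
    · intro hh
      exact h1 (i + 1) (by omega)
        ((x_congr (show i + 1 = i + 2 - 1 by omega)).trans hh)
    · intro k hk1 hk2
      have hk1' : i < k.val := hk1
      have hk2' : k.val < i + 2 := hk2
      exact (x_congr (show k.val - 1 = i by omega)).trans
        (hbad.trans (x_congr (show i + 2 = k.val + 1 by omega)))
  have hnot : ((⟨i, by omega⟩, ⟨i + 2, hi⟩) : Fin n × Fin n) ∉ adjI x := by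
    rw [adjI, Finset.mem_image]
    rintro ⟨a, ha, hae⟩
    rw [Dfin, Finset.mem_filter] at ha
    obtain ⟨-, h, -⟩ := ha
    rw [dif_pos h] at hae
    have e1 : a.val = i := congrArg (fun p : Fin n × Fin n => p.1.val) hae
    have e2 : a.val + 1 = i + 2 := congrArg (fun p : Fin n × Fin n => p.2.val) hae
    omega
  have hsub : insert ((⟨i, by omega⟩, ⟨i + 2, hi⟩) : Fin n × Fin n) (adjI x) ⊆ paramI x := by
    intro p hp
    rw [Finset.mem_insert] at hp
    rcases hp with rfl | hp
    · exact hmem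
    · exact adjI_subset x hp
  calc (Dfin x).card + 1
      = (insert ((⟨i, by omega⟩, ⟨i + 2, hi⟩) : Fin n × Fin n) (adjI x)).card := by
        rw [Finset.card_insert_of_notMem hnot, card_adjI]
    _ ≤ (paramI x).card := Finset.card_le_card hsub

noncomputable def Ffin (n : ℕ) : Finset (Fin n) :=
  Finset.univ.filter fun a : Fin n => a.val + 1 < n

lemma Dfin_subset_Ffin (x : Fin n → Fin q) : Dfin x ⊆ Ffin n := by
  intro a ha
  rw [Dfin, Finset.mem_filter] at ha
  rw [Ffin, Finset.mem_filter]
  obtain ⟨-, h, -⟩ := ha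
  exact ⟨Finset.mem_univ _, h⟩

lemma card_Ffin (hn : 1 ≤ n) : (Ffin n).card = n - 1 := by
  have he : Ffin n = Finset.univ.erase (⟨n - 1, by omega⟩ : Fin n) := by
    ext a
    rw [Ffin, Finset.mem_filter, Finset.mem_erase]
    have := a.isLt
    constructor
    · rintro ⟨-, h⟩
      refine ⟨?_, Finset.mem_univ _⟩
      intro hh
      have := congrArg Fin.val hh
      simp at this
      omega
    · rintro ⟨h, -⟩
      refine ⟨Finset.mem_univ _, ?_⟩
      rcases Nat.lt_or_ge (a.val + 1) n with hh | hh
      · exact hh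
      · exact absurd (Fin.ext (show a.val = n - 1 by omega)) h
  rw [he, Finset.card_erase_of_mem (Finset.mem_univ _), Finset.card_univ,
    Fintype.card_fin]

lemma Dfin_card_le (x : Fin n → Fin q) (hn : 1 ≤ n) : (Dfin x).card ≤ n - 1 := by
  rw [← card_Ffin hn]
  exact Finset.card_le_card (Dfin_subset_Ffin x)

lemma Dfin_card_of_cond1 (x : Fin n → Fin q) (hn : 1 ≤ n)
    (h1 : ∀ i : ℕ, ∀ h : i + 1 < n, x ⟨i, Nat.lt_of_le_of_lt (Nat.le_add_right i _) h⟩ ≠ x ⟨i + 1, h⟩) :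
    (Dfin x).card = n - 1 := by
  have hsub : Ffin n ⊆ Dfin x := by
    intro a ha
    rw [Ffin, Finset.mem_filter] at ha
    rw [Dfin, Finset.mem_filter]
    exact ⟨Finset.mem_univ _, ha.2, fun hh => h1 a.val ha.2 hh.symm⟩
  have := Finset.card_le_card hsub
  have := Finset.card_le_card (Dfin_subset_Ffin x)
  rw [card_Ffin hn] at *
  omega

lemma cond1_of_Dfin_card (x : Fin n → Fin q) (hn : 1 ≤ n)
    (hd : (Dfin x).card = n - 1) :
    ∀ i : ℕ, ∀ h : i + 1 < n, x ⟨i, Nat.lt_of_le_of_lt (Nat.le_add_right i _) h⟩ ≠ x ⟨i + 1, h⟩ := by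
  have he : Dfin x = Ffin n :=
    Finset.eq_of_subset_of_card_le (Dfin_subset_Ffin x)
      (by rw [card_Ffin hn, hd])
  intro i h
  have : (⟨i, by omega⟩ : Fin n) ∈ Dfin x := by
    rw [he, Ffin, Finset.mem_filter]
    exact ⟨Finset.mem_univ _, h⟩
  rw [Dfin, Finset.mem_filter] at this
  obtain ⟨-, h', hne⟩ := this
  exact fun hh => hne hh.symm

lemma key_bound (hq : 3 ≤ q) (hn : 1 ≤ n) (x : Fin n → Fin q) :
    (fllBall q n 1 x).card ≤ n ^ 2 * (q - 1) - n + 2 ∧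
    ((fllBall q n 1 x).card = n ^ 2 * (q - 1) - n + 2 ↔
      ((∀ i : ℕ, ∀ h : i + 1 < n, x ⟨i, Nat.lt_of_le_of_lt (Nat.le_add_right i _) h⟩ ≠ x ⟨i + 1, h⟩) ∧
       (∀ i : ℕ, ∀ h : i + 2 < n, x ⟨i, Nat.lt_of_le_of_lt (Nat.le_add_right i _) h⟩ ≠ x ⟨i + 2, h⟩))) := by
  have hmaster := master_count hn x
  have hPI := paramI_lower x
  have hd := Dfin_card_le x hn
  have hC : 2 ≤ q - 1 := by omega
  have hv2 : 2 ≤ n * (q - 1) := by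
    calc 2 = 1 * 2 := by omega
    _ ≤ n * (q - 1) := Nat.mul_le_mul hn hC
  have f1 : (2 * n + (Dfin x).card * n) * (q - 1)
      = 2 * (n * (q - 1)) + (Dfin x).card * (n * (q - 1)) := by ring
  have f2 : n ^ 2 * (q - 1) = n * (n * (q - 1)) := by ring
  have hu : (Dfin x).card + (n - 1 - (Dfin x).card) = n - 1 := by omega
  have f3 : (Dfin x).card * (n * (q - 1)) + (n - 1 - (Dfin x).card) * (n * (q - 1))
      = (n - 1) * (n * (q - 1)) := by rw [← Nat.add_mul, hu]
  have f4 : (n - 1) * (n * (q - 1)) + n * (q - 1) = n * (n * (q - 1)) := by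
    have : (n - 1) * (n * (q - 1)) + 1 * (n * (q - 1)) = ((n - 1) + 1) * (n * (q - 1)) :=
      (Nat.add_mul _ _ _).symm
    rw [one_mul] at this
    rw [this]
    congr 1
    omega
  have f5 : (n - 1 - (Dfin x).card) * 2 ≤ (n - 1 - (Dfin x).card) * (n * (q - 1)) :=
    Nat.mul_le_mul_left _ hv2
  have f7 : n ≤ n * (n * (q - 1)) := by
    calc n = n * 1 := (Nat.mul_one n).symm
    _ ≤ n * (n * (q - 1)) := Nat.mul_le_mul_left _ (by omega)
  rw [f1] at hmaster
  constructor
  · omega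
  constructor
  · -- equality implies the two conditions
    intro hE
    have hd1 : (Dfin x).card = n - 1 := by
      by_contra hdne
      omega
    have hcond1 := cond1_of_Dfin_card x hn hd1
    refine ⟨hcond1, ?_⟩
    intro i h
    by_contra hbad
    have hextra := paramI_extra x hcond1 h hbad
    have hu0 : n - 1 - (Dfin x).card = 0 := by omega
    have f6 : (n - 1 - (Dfin x).card) * (n * (q - 1)) = 0 := by rw [hu0]; ring
    omega
  · -- the two conditions imply equality
    rintro ⟨h1, h2⟩
    have hd1 : (Dfin x).card = n - 1 := Dfin_card_of_cond1 x hn h1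
    have hPIle : (paramI x).card ≤ (Dfin x).card := by
      rw [← card_adjI x]
      exact Finset.card_le_card (paramI_subset_adjI x h2)
    have hu0 : n - 1 - (Dfin x).card = 0 := by omega
    have f6 : (n - 1 - (Dfin x).card) * (n * (q - 1)) = 0 := by rw [hu0]; ring
    omega

lemma exists_extremal (hq : 3 ≤ q) :
    ∃ x : Fin n → Fin q,
      (∀ i : ℕ, ∀ h : i + 1 < n, x ⟨i, Nat.lt_of_le_of_lt (Nat.le_add_right i _) h⟩ ≠ x ⟨i + 1, h⟩) ∧
      (∀ i : ℕ, ∀ h : i + 2 < n, x ⟨i, Nat.lt_of_le_of_lt (Nat.le_add_right i _) h⟩ ≠ x ⟨i + 2, h⟩) := by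
  refine ⟨fun k => ⟨k.val % 3, Nat.lt_of_lt_of_le (Nat.mod_lt _ (by omega)) hq⟩, ?_, ?_⟩
  · intro i h hh
    have h3 : i % 3 = (i + 1) % 3 := congrArg Fin.val hh
    omega
  · intro i h hh
    have h3 : i % 3 = (i + 2) % 3 := congrArg Fin.val hh
    omega
end Work

/-- For `q ≥ 3` and `n ≥ 1`, the maximum size of an FLL `1`-ball in
`Z_q^n` is `n²(q-1) - n + 2`, attained exactly at the sequences with `n` runs
(adjacent symbols distinct) satisfying `x_i ≠ x_{i+2}` for all `i`. -/
theorem max_fll_ball_nonbinary (q n : ℕ) (hq : 3 ≤ q) (hn : 1 ≤ n) :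
    (∀ x : Fin n → Fin q, (fllBall q n 1 x).card ≤ n ^ 2 * (q - 1) - n + 2) ∧
      (∃ x : Fin n → Fin q, (fllBall q n 1 x).card = n ^ 2 * (q - 1) - n + 2) ∧
      (∀ x : Fin n → Fin q,
        (fllBall q n 1 x).card = n ^ 2 * (q - 1) - n + 2 ↔
          ((∀ i : ℕ, ∀ h : i + 1 < n, x ⟨i, by omega⟩ ≠ x ⟨i + 1, h⟩) ∧
            (∀ i : ℕ, ∀ h : i + 2 < n, x ⟨i, by omega⟩ ≠ x ⟨i + 2, h⟩))) := by
  refine ⟨fun x => (key_bound hq hn x).1, ?_, fun x => (key_bound hq hn x).2⟩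
  obtain ⟨x, hx⟩ := exists_extremal (n := n) hq
  exact ⟨x, (key_bound hq hn x).2.mpr hx⟩
end

section
/- Let n ≥ 1 and 1 ≤ α ≤ n be integers. Among all sequences y ∈ Z_2^n with A(y) = α, the size of the FLL 1-ball |L_1(y)| is maximal exactly for the α-balanced sequences; that is, for x ∈ Z_2^n with A(x) = α, |L_1(x)| = max{ |L_1(y)| : y ∈ Z_2^n, A(y) = α } if and only if x is α-balanced. -/
open scoped Classical

namespace FLLAux

lemma fin2_eq_of_ne_ne {a b c : Fin 2} (h1 : a ≠ b) (h2 : c ≠ b) : a = c := by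
  revert a b c; decide

lemma fin2_ne_iff {a b : Fin 2} (h : a ≠ b) : a = b + 1 := by revert a b; decide

/-- Total extension of a word to ℕ. -/
def xt {n : ℕ} (x : Fin n → Fin 2) (k : ℕ) : Fin 2 :=
  if h : k < n then x ⟨k, h⟩ else 0

lemma xt_lt {n : ℕ} (x : Fin n → Fin 2) {k : ℕ} (h : k < n) : xt x k = x ⟨k, h⟩ := dif_pos h

lemma xt_fin {n : ℕ} (x : Fin n → Fin 2) (k : Fin n) : xt x (k : ℕ) = x k := by
  rw [xt_lt x k.isLt]

/-- `AltB x i j`: no adjacent equal pair within `[i, j)`. -/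
def AltB {n : ℕ} (x : Fin n → Fin 2) (i j : ℕ) : Prop :=
  ∀ k, i ≤ k → k < j → xt x k ≠ xt x (k + 1)

lemma AltB.mono {n : ℕ} {x : Fin n → Fin 2} {i j i' j' : ℕ} (h : AltB x i j)
    (hi : i ≤ i') (hj : j' ≤ j) : AltB x i' j' :=
  fun k hk hk' => h k (le_trans hi hk) (lt_of_lt_of_le hk' hj)

lemma AltB_self {n : ℕ} (x : Fin n → Fin 2) (j : ℕ) : AltB x j j :=
  fun k hk hk' => absurd (lt_of_le_of_lt hk hk') (lt_irrefl _)

lemma blockSeg_length {α : Type*} (l : List α) (i j : ℕ) (hij : i ≤ j) (hj : j < l.length) :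
    (blockSeg l i j).length = j + 1 - i := by
  simp only [blockSeg, List.length_take, List.length_drop]
  omega

lemma blockSeg_getElem {α : Type*} (l : List α) (i j k : ℕ) (h : k < (blockSeg l i j).length) :
    (blockSeg l i j)[k] = l[i + k]'(by
      simp only [blockSeg, List.length_take, List.length_drop] at h; omega) := by
  simp only [blockSeg] at h ⊢
  simp [List.getElem_take, List.getElem_drop]

lemma blockSeg_ofFn_getElem {n : ℕ} (x : Fin n → Fin 2) (i j k : ℕ) (hij : i ≤ j) (hj : j < n)
    (h : k < (blockSeg (List.ofFn x) i j).length) :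
    (blockSeg (List.ofFn x) i j)[k] = xt x (i + k) := by
  have hlen : (blockSeg (List.ofFn x) i j).length = j + 1 - i :=
    blockSeg_length _ i j hij (by simpa using hj)
  rw [blockSeg_getElem, List.getElem_ofFn, xt_lt x (show i + k < n by omega)]

lemma isAltList_iff_bin (l : List (Fin 2)) :
    IsAltList l ↔ ∀ k, ∀ h : k + 1 < l.length, l[k]'(by omega) ≠ l[k + 1] := by
  constructor
  · intro h k hk
    have := h.1 k hk
    simpa [List.get_eq_getElem] using this
  · intro h
    constructor
    · intro k hk
      simpa [List.get_eq_getElem] using h k hk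
    · intro k hk
      have h1 := h k (by omega)
      have h2 := h (k + 1) (by omega)
      simp only [List.get_eq_getElem]
      exact fin2_eq_of_ne_ne h1 (Ne.symm h2)

lemma isAlt_blockSeg_iff {n : ℕ} (x : Fin n → Fin 2) (i j : ℕ) (hij : i ≤ j) (hj : j < n) :
    IsAltList (blockSeg (List.ofFn x) i j) ↔ AltB x i j := by
  have hlen : (blockSeg (List.ofFn x) i j).length = j + 1 - i :=
    blockSeg_length _ i j hij (by simpa using hj)
  rw [isAltList_iff_bin]
  constructor
  · intro h k hk hk'
    have hk2 : (k - i) + 1 < (blockSeg (List.ofFn x) i j).length := by omega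
    have := h (k - i) hk2
    rw [blockSeg_ofFn_getElem x i j _ hij hj, blockSeg_ofFn_getElem x i j _ hij hj] at this
    rw [show i + (k - i) = k by omega, show i + (k - i + 1) = k + 1 by omega] at this
    exact this
  · intro h k hk
    rw [blockSeg_ofFn_getElem x i j _ hij hj, blockSeg_ofFn_getElem x i j _ hij hj,
      show i + (k + 1) = (i + k) + 1 by omega]
    exact h (i + k) (by omega) (by omega)

lemma AltB_left_split {n : ℕ} (x : Fin n → Fin 2) (i j : ℕ) (hi : 0 < i) (hij : i ≤ j) :
    AltB x (i - 1) j ↔ (xt x (i - 1) ≠ xt x i ∧ AltB x i j) := by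
  constructor
  · intro h
    refine ⟨?_, h.mono (by omega) le_rfl⟩
    have := h (i - 1) le_rfl (by omega)
    rwa [show i - 1 + 1 = i by omega] at this
  · rintro ⟨h1, h2⟩ k hk hk'
    rcases eq_or_lt_of_le hk with rfl | hlt
    · rwa [show i - 1 + 1 = i by omega]
    · exact h2 k (by omega) hk'

lemma AltB_right_split {n : ℕ} (x : Fin n → Fin 2) (i j : ℕ) (hij : i ≤ j) :
    AltB x i (j + 1) ↔ (AltB x i j ∧ xt x j ≠ xt x (j + 1)) := by
  constructor
  · intro h
    exact ⟨h.mono le_rfl (by omega), h j hij (by omega)⟩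
  · rintro ⟨h1, h2⟩ k hk hk'
    rcases eq_or_lt_of_le (Nat.lt_succ_iff.mp hk') with rfl | hlt
    · exact h2
    · exact h1 k hk hlt

lemma isMaxAltSeg_iff {n : ℕ} (hn : 1 ≤ n) (x : Fin n → Fin 2) (i j : ℕ) :
    IsMaxAltSeg (List.ofFn x) i j ↔
      i ≤ j ∧ j < n ∧ AltB x i j ∧ (i = 0 ∨ xt x (i - 1) = xt x i) ∧
        (j = n - 1 ∨ xt x j = xt x (j + 1)) := by
  rw [IsMaxAltSeg]
  simp only [List.length_ofFn]
  constructor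
  · rintro ⟨hij, hj, halt, hleft, hright⟩
    rw [isAlt_blockSeg_iff x i j hij hj] at halt
    refine ⟨hij, hj, halt, ?_, ?_⟩
    · rcases hleft with h0 | h
      · exact Or.inl h0
      · rcases Nat.eq_zero_or_pos i with h0 | hi
        · exact Or.inl h0
        · right
          rw [isAlt_blockSeg_iff x (i-1) j (by omega) hj, AltB_left_split x i j hi hij] at h
          by_contra hne
          exact h ⟨hne, halt⟩
    · rcases hright with h0 | h
      · exact Or.inl h0
      · rcases Nat.eq_or_lt_of_le (show j + 1 ≤ n by omega) with h0 | hlt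
        · exact Or.inl (by omega)
        · right
          rw [isAlt_blockSeg_iff x i (j+1) (by omega) (by omega), AltB_right_split x i j hij] at h
          by_contra hne
          exact h ⟨halt, hne⟩
  · rintro ⟨hij, hj, halt, hleft, hright⟩
    refine ⟨hij, hj, (isAlt_blockSeg_iff x i j hij hj).mpr halt, ?_, ?_⟩
    · rcases hleft with h0 | h
      · exact Or.inl h0
      · rcases Nat.eq_zero_or_pos i with h0 | hi
        · exact Or.inl h0
        · right
          rw [isAlt_blockSeg_iff x (i-1) j (by omega) hj, AltB_left_split x i j hi hij]
          rintro ⟨hne, _⟩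
          exact hne h
    · rcases hright with h0 | h
      · exact Or.inl h0
      · rcases Nat.eq_or_lt_of_le (show j + 1 ≤ n by omega) with h0 | hlt
        · exact Or.inl (by omega)
        · right
          rw [isAlt_blockSeg_iff x i (j+1) (by omega) (by omega), AltB_right_split x i j hij]
          rintro ⟨_, hne⟩
          exact hne h

end FLLAux
namespace FLLAux

variable {n : ℕ}

/-- Right endpoints of maximal alternating segments. -/
noncomputable def Eset (x : Fin n → Fin 2) : Finset ℕ :=
  (Finset.range n).filter fun j => j = n - 1 ∨ xt x j = xt x (j + 1)

/-- Breakpoints. -/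
noncomputable def Bset (x : Fin n → Fin 2) : Finset ℕ :=
  (Finset.range (n - 1)).filter fun t => xt x t = xt x (t + 1)

lemma mem_Eset {x : Fin n → Fin 2} {j : ℕ} :
    j ∈ Eset x ↔ j < n ∧ (j = n - 1 ∨ xt x j = xt x (j + 1)) := by
  rw [Eset, Finset.mem_filter, Finset.mem_range]

lemma mem_Bset {x : Fin n → Fin 2} {t : ℕ} :
    t ∈ Bset x ↔ t < n - 1 ∧ xt x t = xt x (t + 1) := by
  rw [Bset, Finset.mem_filter, Finset.mem_range]

lemma Eset_eq (hn : 1 ≤ n) (x : Fin n → Fin 2) : Eset x = insert (n - 1) (Bset x) := by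
  ext j
  rw [mem_Eset, Finset.mem_insert, mem_Bset]
  constructor
  · rintro ⟨hj, h | h⟩
    · exact Or.inl h
    · rcases Nat.eq_or_lt_of_le (show j + 1 ≤ n by omega) with h0 | hlt
      · exact Or.inl (by omega)
      · exact Or.inr ⟨by omega, h⟩
  · rintro (rfl | ⟨hj, h⟩)
    · exact ⟨by omega, Or.inl rfl⟩
    · exact ⟨by omega, Or.inr h⟩

lemma notmem_Bset (x : Fin n → Fin 2) : n - 1 ∉ Bset x := by
  rw [mem_Bset]; rintro ⟨h, -⟩; omega

lemma card_Eset (hn : 1 ≤ n) (x : Fin n → Fin 2) : (Eset x).card = (Bset x).card + 1 := by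
  rw [Eset_eq hn x, Finset.card_insert_of_notMem (notmem_Bset x)]

lemma mem_Eset_last (hn : 1 ≤ n) (x : Fin n → Fin 2) : n - 1 ∈ Eset x :=
  mem_Eset.mpr ⟨by omega, Or.inl rfl⟩

/-- Start of the maximal alternating segment ending at `j`. -/
noncomputable def stIdx (x : Fin n → Fin 2) (j : ℕ) : ℕ :=
  Nat.find (⟨j, AltB_self x j⟩ : ∃ i, AltB x i j)

lemma stIdx_alt (x : Fin n → Fin 2) (j : ℕ) : AltB x (stIdx x j) j :=
  Nat.find_spec (⟨j, AltB_self x j⟩ : ∃ i, AltB x i j)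

lemma stIdx_min (x : Fin n → Fin 2) {i j : ℕ} (h : AltB x i j) : stIdx x j ≤ i :=
  Nat.find_min' _ h

lemma stIdx_le (x : Fin n → Fin 2) (j : ℕ) : stIdx x j ≤ j :=
  stIdx_min x (AltB_self x j)

lemma stIdx_break (x : Fin n → Fin 2) {j : ℕ} (h : 0 < stIdx x j) :
    xt x (stIdx x j - 1) = xt x (stIdx x j) := by
  have hlt : stIdx x j - 1 < stIdx x j := by omega
  have key : stIdx x j - 1 < Nat.find (⟨j, AltB_self x j⟩ : ∃ i, AltB x i j) := hlt
  have hnot : ¬ AltB x (stIdx x j - 1) j := Nat.find_min (p := fun i => AltB x i j) _ key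
  rw [AltB_left_split x (stIdx x j) j h (stIdx_le x j)] at hnot
  by_contra hne
  exact hnot ⟨hne, stIdx_alt x j⟩

lemma maxAltSegs_eq (hn : 1 ≤ n) (x : Fin n → Fin 2) :
    maxAltSegs (List.ofFn x) = (Eset x).image fun j => (stIdx x j, j) := by
  ext p
  simp only [maxAltSegs, Finset.mem_filter, Finset.mem_product, Finset.mem_range,
    Finset.mem_image, List.length_ofFn]
  rw [isMaxAltSeg_iff hn x p.1 p.2]
  constructor
  · rintro ⟨⟨hi, hj⟩, hij, hjn, halt, hleft, hright⟩
    refine ⟨p.2, mem_Eset.mpr ⟨hjn, hright⟩, ?_⟩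
    have h1 : stIdx x p.2 ≤ p.1 := stIdx_min x halt
    have h2 : p.1 ≤ stIdx x p.2 := by
      by_contra hlt
      push_neg at hlt
      rcases hleft with h0 | heq
      · omega
      · exact (stIdx_alt x p.2 (p.1 - 1) (by omega) (by omega))
          (by rwa [show p.1 - 1 + 1 = p.1 by omega])
    exact Prod.ext_iff.mpr ⟨le_antisymm h1 h2, rfl⟩
  · rintro ⟨j, hj, rfl⟩
    dsimp only
    obtain ⟨hjn, hright⟩ := mem_Eset.mp hj
    exact ⟨⟨by have := stIdx_le x j; omega, hjn⟩, stIdx_le x j, hjn, stIdx_alt x j,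
      (Nat.eq_zero_or_pos (stIdx x j)).imp id (fun hpos => stIdx_break x hpos), hright⟩

lemma numAltSegs_eq_card (hn : 1 ≤ n) (x : Fin n → Fin 2) :
    numAltSegs (List.ofFn x) = (Eset x).card := by
  rw [numAltSegs, maxAltSegs_eq hn x, Finset.card_image_of_injective]
  intro u v huv
  exact congrArg Prod.snd huv

lemma seg_sep (x : Fin n → Fin 2) {j j' : ℕ} (hj : j ∈ Eset x) (hj' : j' ∈ Eset x)
    (hlt : j < j') : j < stIdx x j' := by
  by_contra hle
  push_neg at hle
  obtain ⟨hjn, hd⟩ := mem_Eset.mp hj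
  have hjn' : j' < n := (mem_Eset.mp hj').1
  have hbrk : xt x j = xt x (j + 1) := by
    rcases hd with h0 | h
    · omega
    · exact h
  exact (stIdx_alt x j' j hle hlt) hbrk

lemma exists_seg (hn : 1 ≤ n) (x : Fin n → Fin 2) {k : ℕ} (hk : k < n) :
    ∃ j ∈ Eset x, stIdx x j ≤ k ∧ k ≤ j := by
  have hne : ((Eset x).filter fun j => k ≤ j).Nonempty :=
    ⟨n - 1, Finset.mem_filter.mpr ⟨mem_Eset_last hn x, by omega⟩⟩
  obtain ⟨hjE, hkj⟩ := Finset.mem_filter.mp (((Eset x).filter fun j => k ≤ j).min'_mem hne)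
  set j := ((Eset x).filter fun j => k ≤ j).min' hne with hjdef
  have hjn : j < n := (mem_Eset.mp hjE).1
  refine ⟨j, hjE, ?_, hkj⟩
  apply stIdx_min
  intro t ht ht' hbrk
  have htE : t ∈ Eset x := mem_Eset.mpr ⟨by omega, Or.inr hbrk⟩
  have : j ≤ t := Finset.min'_le _ t (Finset.mem_filter.mpr ⟨htE, ht⟩)
  omega

lemma segs_partition (hn : 1 ≤ n) (x : Fin n → Fin 2) :
    (Eset x).biUnion (fun j => Finset.Icc (stIdx x j) j) = Finset.range n := by
  ext k
  simp only [Finset.mem_biUnion, Finset.mem_Icc, Finset.mem_range]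
  constructor
  · rintro ⟨j, hj, h1, h2⟩
    have := (mem_Eset.mp hj).1
    omega
  · intro hk
    obtain ⟨j, hj, h1, h2⟩ := exists_seg hn x hk
    exact ⟨j, hj, h1, h2⟩

lemma segs_disjoint (x : Fin n → Fin 2) :
    ∀ j ∈ Eset x, ∀ j' ∈ Eset x, j ≠ j' →
      Disjoint (Finset.Icc (stIdx x j) j) (Finset.Icc (stIdx x j') j') := by
  intro j hj j' hj' hne
  rw [Finset.disjoint_left]
  intro k hk hk'
  simp only [Finset.mem_Icc] at hk hk'
  rcases Nat.lt_or_ge j j' with h | h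
  · have := seg_sep x hj hj' h; omega
  · have hlt : j' < j := by omega
    have := seg_sep x hj' hj hlt; omega

lemma sum_seg_lengths (hn : 1 ≤ n) (x : Fin n → Fin 2) :
    ∑ j ∈ Eset x, (j + 1 - stIdx x j) = n := by
  calc ∑ j ∈ Eset x, (j + 1 - stIdx x j)
      = ∑ j ∈ Eset x, (Finset.Icc (stIdx x j) j).card := by
        apply Finset.sum_congr rfl; intro j hj; rw [Nat.card_Icc]
    _ = ((Eset x).biUnion fun j => Finset.Icc (stIdx x j) j).card :=
        (Finset.card_biUnion (segs_disjoint x)).symm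
    _ = n := by rw [segs_partition hn x, Finset.card_range]

lemma sum_maxAltSegs_len (hn : 1 ≤ n) (x : Fin n → Fin 2) :
    ∑ p ∈ maxAltSegs (List.ofFn x), (p.2 + 1 - p.1) = n := by
  rw [maxAltSegs_eq hn x, Finset.sum_image (fun u _ v _ huv => congrArg Prod.snd huv)]
  exact sum_seg_lengths hn x

lemma maxAltSegs_len_pos (hn : 1 ≤ n) (x : Fin n → Fin 2) :
    ∀ p ∈ maxAltSegs (List.ofFn x), 1 ≤ p.2 + 1 - p.1 := by
  intro p hp
  rw [maxAltSegs_eq hn x, Finset.mem_image] at hp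
  obtain ⟨j, hj, rfl⟩ := hp
  have := stIdx_le x j
  dsimp only
  omega

/-- Number of strictly increasing pairs with no break between them. -/
noncomputable def Pc (x : Fin n → Fin 2) : ℕ :=
  ((Finset.range n ×ˢ Finset.range n).filter fun p => p.1 < p.2 ∧ AltB x p.1 p.2).card

lemma card_lt_pairs (s : Finset ℕ) :
    2 * ((s ×ˢ s).filter fun p => p.1 < p.2).card = s.card * s.card - s.card := by
  have hcard : ((s ×ˢ s).filter fun p => p.1 < p.2).card
      = ((s ×ˢ s).filter fun p => p.2 < p.1).card := by
    apply Finset.card_bij (fun p _ => (p.2, p.1))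
    · rintro ⟨u, v⟩ hp
      simp only [Finset.mem_filter, Finset.mem_product] at hp ⊢
      exact ⟨⟨hp.1.2, hp.1.1⟩, hp.2⟩
    · rintro ⟨u, v⟩ hu ⟨u', v'⟩ hv h
      simp only [Prod.ext_iff] at h ⊢
      exact ⟨h.2, h.1⟩
    · rintro ⟨u, v⟩ hp
      simp only [Finset.mem_filter, Finset.mem_product] at hp
      exact ⟨(v, u), Finset.mem_filter.mpr ⟨Finset.mem_product.mpr ⟨hp.1.2, hp.1.1⟩, hp.2⟩, rfl⟩
  have hunion : (s ×ˢ s).filter (fun p => p.1 < p.2) ∪ (s ×ˢ s).filter (fun p => p.2 < p.1)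
      = (s ×ˢ s).filter fun p => p.1 ≠ p.2 := by
    rw [← Finset.filter_or]
    apply Finset.filter_congr
    intro p hp
    simp only [ne_eq]
    omega
  have hdisj : Disjoint ((s ×ˢ s).filter fun p => p.1 < p.2)
      ((s ×ˢ s).filter fun p => p.2 < p.1) := by
    rw [Finset.disjoint_left]
    intro p hp hp'
    simp only [Finset.mem_filter] at hp hp'
    omega
  have h2 := Finset.card_union_of_disjoint hdisj
  rw [hunion] at h2
  have h3 : ((s ×ˢ s).filter fun p => p.1 ≠ p.2) = s.offDiag := by
    ext p
    simp [Finset.mem_offDiag, Finset.mem_filter, Finset.mem_product, and_assoc]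
  rw [h3, Finset.offDiag_card] at h2
  omega

lemma Pc_partition (hn : 1 ≤ n) (x : Fin n → Fin 2) :
    ((Finset.range n ×ˢ Finset.range n).filter fun p => p.1 < p.2 ∧ AltB x p.1 p.2)
      = (Eset x).biUnion fun j =>
          (Finset.Icc (stIdx x j) j ×ˢ Finset.Icc (stIdx x j) j).filter fun p => p.1 < p.2 := by
  ext p
  simp only [Finset.mem_filter, Finset.mem_product, Finset.mem_range, Finset.mem_biUnion,
    Finset.mem_Icc]
  constructor
  · rintro ⟨⟨hu, hv⟩, huv, halt⟩
    obtain ⟨j, hj, h1, h2⟩ := exists_seg hn x hv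
    refine ⟨j, hj, ⟨⟨?_, by omega⟩, ⟨?_, h2⟩⟩, huv⟩
    · apply stIdx_min
      intro t ht ht' hbrk
      rcases Nat.lt_or_ge t p.2 with hlt | hge
      · exact halt t ht hlt hbrk
      · exact (stIdx_alt x j t (by omega) ht') hbrk
    · apply stIdx_min
      intro t ht ht' hbrk
      rcases Nat.lt_or_ge t p.2 with hlt | hge
      · exact halt t (by omega) hlt hbrk
      · exact (stIdx_alt x j t (by omega) ht') hbrk
  · rintro ⟨j, hj, ⟨⟨h1, h2⟩, ⟨h3, h4⟩⟩, huv⟩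
    have hjn := (mem_Eset.mp hj).1
    refine ⟨⟨by omega, by omega⟩, huv, ?_⟩
    exact (stIdx_alt x j).mono h1 h4

lemma two_Pc (hn : 1 ≤ n) (x : Fin n → Fin 2) :
    2 * Pc x = ∑ p ∈ maxAltSegs (List.ofFn x), (p.2 + 1 - p.1) * (p.2 + 1 - p.1 - 1) := by
  have harith : ∀ s : ℕ, s * s - s = s * (s - 1) := by
    intro s
    cases s with
    | zero => rfl
    | succ m => rw [Nat.succ_sub_one, Nat.mul_succ]; omega
  rw [Pc, Pc_partition hn x, maxAltSegs_eq hn x,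
    Finset.sum_image (fun u _ v _ huv => congrArg Prod.snd huv)]
  rw [Finset.card_biUnion, Finset.mul_sum]
  · apply Finset.sum_congr rfl
    intro j hj
    rw [card_lt_pairs, Nat.card_Icc, harith]
  · intro j hj j' hj' hne
    rw [Function.onFun, Finset.disjoint_left]
    rintro ⟨u, v⟩ hp hp'
    simp only [Finset.mem_filter, Finset.mem_product, Finset.mem_Icc] at hp hp'
    have := segs_disjoint x j hj j' hj' hne
    rw [Finset.disjoint_left] at this
    exact this (Finset.mem_Icc.mpr hp.1.1) (Finset.mem_Icc.mpr hp'.1.1)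

end FLLAux
namespace FLLAux

variable {n : ℕ}

lemma lcs_set_bddAbove {α : Type*} (x y : List α) :
    BddAbove {k | ∃ z : List α, z.Sublist x ∧ z.Sublist y ∧ z.length = k} := by
  have hb : ∀ k ∈ {k | ∃ z : List α, z.Sublist x ∧ z.Sublist y ∧ z.length = k}, k ≤ x.length := by
    rintro k ⟨z, hzx, _, rfl⟩
    exact hzx.length_le
  exact ⟨x.length, hb⟩

lemma lcsLen_le_left {α : Type*} (x y : List α) : lcsLen x y ≤ x.length := by
  have hne : {k | ∃ z : List α, z.Sublist x ∧ z.Sublist y ∧ z.length = k}.Nonempty :=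
    ⟨0, [], List.nil_sublist x, List.nil_sublist y, rfl⟩
  apply csSup_le hne
  rintro k ⟨z, hzx, _, rfl⟩
  exact hzx.length_le

lemma lcsLen_self {α : Type*} (l : List α) : lcsLen l l = l.length := by
  apply le_antisymm (lcsLen_le_left l l)
  exact le_csSup (lcs_set_bddAbove l l) ⟨l, List.Sublist.refl l, List.Sublist.refl l, rfl⟩

lemma sublist_eraseIdx {α : Type*} :
    ∀ (l z : List α), z.Sublist l → z.length + 1 = l.length →
      ∃ i, i < l.length ∧ z = l.eraseIdx i := by
  intro l
  induction l with
  | nil => intro z h hlen; simp at hlen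
  | cons a l ih =>
    intro z h hlen
    cases h with
    | cons _ h' =>
      have hlz : z.length = l.length := by
        simp only [List.length_cons] at hlen; omega
      have hz := h'.eq_of_length hlz
      exact ⟨0, by simp, by simp [hz]⟩
    | cons_cons _ h' =>
      rename_i z'
      obtain ⟨i, hi, hzi⟩ := ih z' h' (by simp only [List.length_cons] at hlen; omega)
      exact ⟨i + 1, by simp only [List.length_cons]; omega, by simp [hzi]⟩

lemma mem_fllBall_iff (hn : 1 ≤ n) (x y : Fin n → Fin 2) :
    y ∈ fllBall 2 n 1 x ↔ y = x ∨ ∃ i, i < n ∧ ∃ j, j < n ∧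
      (List.ofFn x).eraseIdx i = (List.ofFn y).eraseIdx j := by
  rw [fllBall, Finset.mem_filter]
  simp only [Finset.mem_univ, true_and]
  rw [fllDist]
  constructor
  · intro h
    have hbdd := lcs_set_bddAbove (List.ofFn x) (List.ofFn y)
    have hne : {k | ∃ z : List (Fin 2), z.Sublist (List.ofFn x) ∧ z.Sublist (List.ofFn y) ∧
        z.length = k}.Nonempty := ⟨0, ⟨[], List.nil_sublist _, List.nil_sublist _, rfl⟩⟩
    have hmem := Nat.sSup_mem hne hbdd
    obtain ⟨z, hzx, hzy, hzlen⟩ := hmem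
    have hle : lcsLen (List.ofFn x) (List.ofFn y) ≤ n := by
      have := lcsLen_le_left (List.ofFn x) (List.ofFn y)
      rwa [List.length_ofFn] at this
    have hge : n - 1 ≤ lcsLen (List.ofFn x) (List.ofFn y) := by omega
    rw [← lcsLen] at hzlen
    rcases Nat.eq_or_lt_of_le hle with heq | hlt
    · left
      have hzx' : z = List.ofFn x := hzx.eq_of_length (by simp [hzlen, heq])
      have hzy' : z = List.ofFn y := hzy.eq_of_length (by simp [hzlen, heq])
      have : List.ofFn y = List.ofFn x := hzy' ▸ hzx'
      exact List.ofFn_injective this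
    · right
      have hlen : z.length = n - 1 := by omega
      obtain ⟨i, hi, hzi⟩ := sublist_eraseIdx (List.ofFn x) z hzx (by simp [hlen]; omega)
      obtain ⟨j, hj, hzj⟩ := sublist_eraseIdx (List.ofFn y) z hzy (by simp [hlen]; omega)
      exact ⟨i, by simpa using hi, j, by simpa using hj, by rw [← hzi, ← hzj]⟩
  · rintro (rfl | ⟨i, hi, j, hj, heq⟩)
    · rw [lcsLen_self]
      simp
    · have hsub : ((List.ofFn x).eraseIdx i).Sublist (List.ofFn x) := List.eraseIdx_sublist _ i
      have hsub' : ((List.ofFn x).eraseIdx i).Sublist (List.ofFn y) := by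
        rw [heq]; exact List.eraseIdx_sublist _ j
      have hlen : ((List.ofFn x).eraseIdx i).length = n - 1 := by
        rw [List.length_eraseIdx]
        simp [hi]
      have : n - 1 ≤ lcsLen (List.ofFn x) (List.ofFn y) :=
        le_csSup (lcs_set_bddAbove _ _) ⟨_, hsub, hsub', hlen⟩
      omega

lemma eraseIdx_ofFn_eq_iff (x y : Fin n → Fin 2) (i j : ℕ) (hi : i < n) (hj : j < n)
    (hij : i ≤ j) :
    (List.ofFn x).eraseIdx i = (List.ofFn y).eraseIdx j ↔
      ((∀ k, k < i → xt y k = xt x k) ∧ (∀ k, i ≤ k → k < j → xt y k = xt x (k + 1)) ∧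
        ∀ k, j < k → k < n → xt y k = xt x k) := by
  have hlx : ((List.ofFn x).eraseIdx i).length = n - 1 := by
    rw [List.length_eraseIdx]; simp [hi]
  have hly : ((List.ofFn y).eraseIdx j).length = n - 1 := by
    rw [List.length_eraseIdx]; simp [hj]
  have getx : ∀ k (h : k < n - 1), ((List.ofFn x).eraseIdx i)[k]'(by omega) =
      if k < i then xt x k else xt x (k + 1) := by
    intro k h
    rw [List.getElem_eraseIdx]
    split
    · rw [List.getElem_ofFn, xt_lt x (by omega : k < n)]
    · rw [List.getElem_ofFn, xt_lt x (by omega : k + 1 < n)]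
  have gety : ∀ k (h : k < n - 1), ((List.ofFn y).eraseIdx j)[k]'(by omega) =
      if k < j then xt y k else xt y (k + 1) := by
    intro k h
    rw [List.getElem_eraseIdx]
    split
    · rw [List.getElem_ofFn, xt_lt y (by omega : k < n)]
    · rw [List.getElem_ofFn, xt_lt y (by omega : k + 1 < n)]
  constructor
  · intro h
    have hget : ∀ k (hk : k < n - 1),
        (if k < i then xt x k else xt x (k + 1)) = (if k < j then xt y k else xt y (k + 1)) := by
      intro k hk
      calc (if k < i then xt x k else xt x (k + 1))
          = ((List.ofFn x).eraseIdx i)[k]'(by omega) := (getx k hk).symm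
        _ = ((List.ofFn y).eraseIdx j)[k]'(by omega) := List.getElem_of_eq h _
        _ = _ := gety k hk
    refine ⟨?_, ?_, ?_⟩
    · intro k hk
      have hk' : k < n - 1 := by omega
      have := hget k hk'
      rw [if_pos hk, if_pos (by omega : k < j)] at this
      exact this.symm
    · intro k hk1 hk2
      have hk' : k < n - 1 := by omega
      have := hget k hk'
      rw [if_neg (by omega), if_pos hk2] at this
      exact this.symm
    · intro k hk1 hk2
      have hk' : k - 1 < n - 1 := by omega
      have := hget (k - 1) hk'
      rw [if_neg (by omega), if_neg (by omega), show k - 1 + 1 = k by omega] at this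
      exact this.symm
  · rintro ⟨h1, h2, h3⟩
    apply List.ext_getElem (by omega)
    intro k hk1 hk2
    rw [hlx] at hk1
    rw [getx k hk1, gety k hk1]
    rcases Nat.lt_or_ge k i with hki | hki
    · rw [if_pos hki, if_pos (by omega)]
      exact (h1 k hki).symm
    · rcases Nat.lt_or_ge k j with hkj | hkj
      · rw [if_neg (by omega), if_pos hkj]
        exact (h2 k hki hkj).symm
      · rw [if_neg (by omega), if_neg (by omega)]
        exact (h3 (k + 1) (by omega) (by omega)).symm

end FLLAux
namespace FLLAux

variable {n : ℕ}

lemma fin2_add_one_ne (a : Fin 2) : a + 1 ≠ a := by revert a; decide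

noncomputable def Dset (x y : Fin n → Fin 2) : Finset ℕ :=
  (Finset.range n).filter fun k => xt y k ≠ xt x k

lemma mem_Dset {x y : Fin n → Fin 2} {k : ℕ} : k ∈ Dset x y ↔ k < n ∧ xt y k ≠ xt x k := by
  rw [Dset, Finset.mem_filter, Finset.mem_range]

lemma Dset_self (x : Fin n → Fin 2) : Dset x x = ∅ := by
  ext k; rw [mem_Dset]; simp

lemma Dset_nonempty {x y : Fin n → Fin 2} (h : y ≠ x) : (Dset x y).Nonempty := by
  by_contra hne
  rw [Finset.not_nonempty_iff_eq_empty] at hne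
  apply h
  funext k
  by_contra hk
  have hm : (k : ℕ) ∈ Dset x y := mem_Dset.mpr ⟨k.isLt, by rw [xt_fin, xt_fin]; exact hk⟩
  rw [hne] at hm
  exact absurd hm (Finset.notMem_empty _)

lemma notmem_Dset {x y : Fin n → Fin 2} {k : ℕ} (hk : k ∉ Dset x y) (hkn : k < n) :
    xt y k = xt x k := by
  rw [mem_Dset] at hk
  push_neg at hk
  exact hk hkn

noncomputable def Fmap (x y : Fin n → Fin 2) : ℕ × ℕ :=
  if h : (Dset x y).Nonempty then ((Dset x y).min' h, (Dset x y).max' h) else (n, n)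

lemma Fmap_self (x : Fin n → Fin 2) : Fmap x x = (n, n) := by
  rw [Fmap, dif_neg]
  rw [Dset_self]
  exact Finset.not_nonempty_empty

lemma Fmap_eq_of {x y : Fin n → Fin 2} {i j : ℕ} (hi : i ∈ Dset x y) (hj : j ∈ Dset x y)
    (hbound : ∀ k ∈ Dset x y, i ≤ k ∧ k ≤ j) : Fmap x y = (i, j) := by
  have hne : (Dset x y).Nonempty := ⟨i, hi⟩
  rw [Fmap, dif_pos hne]
  have h1 : (Dset x y).min' hne = i :=
    le_antisymm (Finset.min'_le _ _ hi) (Finset.le_min' _ _ _ fun k hk => (hbound k hk).1)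
  have h2 : (Dset x y).max' hne = j :=
    le_antisymm (Finset.max'_le _ _ _ fun k hk => (hbound k hk).2) (Finset.le_max' _ _ hj)
  rw [h1, h2]

/-- Left-shift word. -/
def Lw (x : Fin n → Fin 2) (i j : ℕ) : Fin n → Fin 2 := fun k =>
  if (k : ℕ) < i then x k else if (k : ℕ) < j then xt x ((k : ℕ) + 1)
  else if (k : ℕ) = j then x k + 1 else x k

/-- Right-shift word. -/
def Rw (x : Fin n → Fin 2) (i j : ℕ) : Fin n → Fin 2 := fun k =>
  if (k : ℕ) < i then x k else if (k : ℕ) = i then x k + 1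
  else if (k : ℕ) ≤ j then xt x ((k : ℕ) - 1) else x k

lemma xt_Lw (x : Fin n → Fin 2) (i j k : ℕ) (hk : k < n) :
    xt (Lw x i j) k =
      if k < i then xt x k else if k < j then xt x (k + 1)
      else if k = j then xt x k + 1 else xt x k := by
  rw [xt_lt _ hk, xt_lt x hk]
  show (if k < i then x ⟨k, hk⟩ else if k < j then xt x (k + 1)
      else if k = j then x ⟨k, hk⟩ + 1 else x ⟨k, hk⟩) = _
  rfl

lemma xt_Rw (x : Fin n → Fin 2) (i j k : ℕ) (hk : k < n) :
    xt (Rw x i j) k =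
      if k < i then xt x k else if k = i then xt x k + 1
      else if k ≤ j then xt x (k - 1) else xt x k := by
  rw [xt_lt _ hk, xt_lt x hk]
  show (if k < i then x ⟨k, hk⟩ else if k = i then x ⟨k, hk⟩ + 1
      else if k ≤ j then xt x (k - 1) else x ⟨k, hk⟩) = _
  rfl

lemma Lw_mem_ball (x : Fin n → Fin 2) {i j : ℕ} (hij : i ≤ j) (hj : j < n) :
    Lw x i j ∈ fllBall 2 n 1 x := by
  rw [mem_fllBall_iff (by omega) x (Lw x i j)]
  right
  refine ⟨i, by omega, j, hj, ?_⟩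
  rw [eraseIdx_ofFn_eq_iff x (Lw x i j) i j (by omega) hj hij]
  refine ⟨?_, ?_, ?_⟩
  · intro k hk
    rw [xt_Lw x i j k (by omega), if_pos hk]
  · intro k hk1 hk2
    rw [xt_Lw x i j k (by omega), if_neg (by omega), if_pos hk2]
  · intro k hk1 hk2
    rw [xt_Lw x i j k hk2, if_neg (by omega), if_neg (by omega), if_neg (by omega)]

lemma Rw_mem_ball (x : Fin n → Fin 2) {i j : ℕ} (hij : i ≤ j) (hj : j < n) :
    Rw x i j ∈ fllBall 2 n 1 x := by
  rw [mem_fllBall_iff (by omega) x (Rw x i j)]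
  right
  refine ⟨j, hj, i, by omega, ?_⟩
  have h := (eraseIdx_ofFn_eq_iff (Rw x i j) x i j (by omega) hj hij).mpr ?_
  · exact h.symm
  refine ⟨?_, ?_, ?_⟩
  · intro k hk
    rw [xt_Rw x i j k (by omega), if_pos hk]
  · intro k hk1 hk2
    rw [xt_Rw x i j (k + 1) (by omega), if_neg (by omega), if_neg (by omega),
      if_pos (by omega : k + 1 ≤ j), Nat.add_sub_cancel]
  · intro k hk1 hk2
    rw [xt_Rw x i j k hk2, if_neg (by omega), if_neg (by omega), if_neg (by omega)]

lemma Fmap_Lw (x : Fin n → Fin 2) {i j : ℕ} (hij : i ≤ j) (hj : j < n)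
    (hcond : i = j ∨ xt x i ≠ xt x (i + 1)) : Fmap x (Lw x i j) = (i, j) := by
  apply Fmap_eq_of
  · refine mem_Dset.mpr ⟨by omega, ?_⟩
    rw [xt_Lw x i j i (by omega), if_neg (lt_irrefl i)]
    rcases Nat.eq_or_lt_of_le hij with rfl | hlt
    · rw [if_neg (lt_irrefl i), if_pos rfl]
      exact fin2_add_one_ne _
    · rw [if_pos hlt]
      rcases hcond with h0 | hne
      · omega
      · exact fun hE => hne hE.symm
  · refine mem_Dset.mpr ⟨hj, ?_⟩
    rw [xt_Lw x i j j hj, if_neg (by omega), if_neg (lt_irrefl j), if_pos rfl]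
    exact fin2_add_one_ne _
  · intro k hk
    obtain ⟨hkn, hne⟩ := mem_Dset.mp hk
    constructor
    · by_contra h
      push_neg at h
      exact hne (by rw [xt_Lw x i j k hkn, if_pos h])
    · by_contra h
      push_neg at h
      exact hne (by rw [xt_Lw x i j k hkn, if_neg (by omega), if_neg (by omega),
        if_neg (by omega)])

lemma Fmap_Rw (x : Fin n → Fin 2) {i j : ℕ} (hij : i ≤ j) (hj : j < n)
    (hcond : i = j ∨ xt x (j - 1) ≠ xt x j) : Fmap x (Rw x i j) = (i, j) := by
  apply Fmap_eq_of
  · refine mem_Dset.mpr ⟨by omega, ?_⟩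
    rw [xt_Rw x i j i (by omega), if_neg (lt_irrefl i), if_pos rfl]
    exact fin2_add_one_ne _
  · refine mem_Dset.mpr ⟨hj, ?_⟩
    rcases Nat.eq_or_lt_of_le hij with rfl | hlt
    · rw [xt_Rw x i i i (by omega), if_neg (lt_irrefl i), if_pos rfl]
      exact fin2_add_one_ne _
    · rw [xt_Rw x i j j hj, if_neg (by omega), if_neg (by omega), if_pos le_rfl]
      rcases hcond with h0 | hne
      · omega
      · exact hne
  · intro k hk
    obtain ⟨hkn, hne⟩ := mem_Dset.mp hk
    constructor
    · by_contra h
      push_neg at h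
      exact hne (by rw [xt_Rw x i j k hkn, if_pos h])
    · by_contra h
      push_neg at h
      exact hne (by rw [xt_Rw x i j k hkn, if_neg (by omega), if_neg (by omega),
        if_neg (by omega)])

lemma ball_classify (hn : 1 ≤ n) (x y : Fin n → Fin 2) (hy : y ∈ fllBall 2 n 1 x)
    (hne : y ≠ x) {i j : ℕ} (hF : Fmap x y = (i, j)) :
    i ≤ j ∧ j < n ∧
      ((y = Lw x i j ∧ (i = j ∨ xt x i ≠ xt x (i + 1))) ∨
        (y = Rw x i j ∧ (i = j ∨ xt x (j - 1) ≠ xt x j))) := by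
  have hDne := Dset_nonempty hne
  rw [Fmap, dif_pos hDne] at hF
  have hmin : (Dset x y).min' hDne = i := congrArg Prod.fst hF
  have hmax : (Dset x y).max' hDne = j := congrArg Prod.snd hF
  have hiD : i ∈ Dset x y := hmin ▸ (Dset x y).min'_mem hDne
  have hjD : j ∈ Dset x y := hmax ▸ (Dset x y).max'_mem hDne
  have hbound : ∀ k ∈ Dset x y, i ≤ k ∧ k ≤ j := fun k hk =>
    ⟨hmin ▸ Finset.min'_le _ _ hk, hmax ▸ Finset.le_max' _ _ hk⟩
  have hjn : j < n := (mem_Dset.mp hjD).1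
  have hij : i ≤ j := (hbound i hiD).2
  refine ⟨hij, hjn, ?_⟩
  rcases (mem_fllBall_iff hn x y).mp hy with rfl | ⟨i₀, hi₀, j₀, hj₀, heq⟩
  · exact absurd rfl hne
  rcases le_or_gt i₀ j₀ with hle | hlt
  · -- deletion at i₀ ≤ insertion at j₀ : left shift
    obtain ⟨c1, c2, c3⟩ := (eraseIdx_ofFn_eq_iff x y i₀ j₀ hi₀ hj₀ hle).mp heq
    have hDsub : ∀ k ∈ Dset x y, i₀ ≤ k ∧ k ≤ j₀ := by
      intro k hk
      obtain ⟨hkn, hkne⟩ := mem_Dset.mp hk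
      constructor
      · by_contra h; push_neg at h; exact hkne (c1 k h)
      · by_contra h; push_neg at h; exact hkne (c3 k h hkn)
    have hii : i₀ ≤ i := (hDsub i hiD).1
    have hjj : j ≤ j₀ := (hDsub j hjD).2
    left
    constructor
    · funext k
      have hkn : (k : ℕ) < n := k.isLt
      rw [← xt_fin y k, ← xt_fin (Lw x i j) k, xt_Lw x i j _ hkn]
      rcases Nat.lt_or_ge (k : ℕ) i with hki | hki
      · rw [if_pos hki]
        exact notmem_Dset (fun hmem => by have := (hbound _ hmem).1; omega) hkn
      · rcases Nat.lt_or_ge (k : ℕ) j with hkj | hkj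
        · rw [if_neg (by omega), if_pos hkj]
          exact c2 _ (by omega) (by omega)
        · rcases Nat.eq_or_lt_of_le hkj with hkj' | hkj'
          · rw [if_neg (by omega), if_neg (by omega), if_pos hkj'.symm]
            have hdk : xt y (k : ℕ) ≠ xt x (k : ℕ) := by
              have h2 := (mem_Dset.mp hjD).2
              rwa [hkj'] at h2
            exact fin2_ne_iff hdk
          · rw [if_neg (by omega), if_neg (by omega), if_neg (by omega)]
            exact notmem_Dset (fun hmem => by have := (hbound _ hmem).2; omega) hkn
    · rcases Nat.eq_or_lt_of_le hij with h0 | hlt2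
      · exact Or.inl h0
      · right
        have hyi : xt y i = xt x (i + 1) := c2 i hii (by omega)
        have hyne : xt y i ≠ xt x i := (mem_Dset.mp hiD).2
        rw [hyi] at hyne
        exact fun hE => hyne hE.symm
  · -- insertion at j₀ < deletion at i₀ : right shift
    obtain ⟨c1, c2, c3⟩ := (eraseIdx_ofFn_eq_iff y x j₀ i₀ hj₀ hi₀ (by omega)).mp heq.symm
    have hDsub : ∀ k ∈ Dset x y, j₀ ≤ k ∧ k ≤ i₀ := by
      intro k hk
      obtain ⟨hkn, hkne⟩ := mem_Dset.mp hk
      constructor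
      · by_contra h; push_neg at h; exact hkne (c1 k h).symm
      · by_contra h; push_neg at h; exact hkne (c3 k h hkn).symm
    have hii : j₀ ≤ i := (hDsub i hiD).1
    have hjj : j ≤ i₀ := (hDsub j hjD).2
    right
    constructor
    · funext k
      have hkn : (k : ℕ) < n := k.isLt
      rw [← xt_fin y k, ← xt_fin (Rw x i j) k, xt_Rw x i j _ hkn]
      rcases Nat.lt_or_ge (k : ℕ) i with hki | hki
      · rw [if_pos hki]
        exact notmem_Dset (fun hmem => by have := (hbound _ hmem).1; omega) hkn
      · rcases Nat.eq_or_lt_of_le hki with hki' | hki'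
        · rw [if_neg (by omega), if_pos hki'.symm]
          have hdk : xt y (k : ℕ) ≠ xt x (k : ℕ) := by
            have h2 := (mem_Dset.mp hiD).2
            rwa [hki'] at h2
          exact fin2_ne_iff hdk
        · rcases le_or_gt (k : ℕ) j with hkj | hkj
          · rw [if_neg (by omega), if_neg (by omega), if_pos hkj]
            have := c2 ((k : ℕ) - 1) (by omega) (by omega)
            rw [show (k : ℕ) - 1 + 1 = (k : ℕ) by omega] at this
            exact this.symm
          · rw [if_neg (by omega), if_neg (by omega), if_neg (by omega)]
            exact notmem_Dset (fun hmem => by have := (hbound _ hmem).2; omega) hkn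
    · rcases Nat.eq_or_lt_of_le hij with h0 | hlt2
      · exact Or.inl h0
      · right
        have hyj : xt y j = xt x (j - 1) := by
          have := c2 (j - 1) (by omega) (by omega)
          rw [show j - 1 + 1 = j by omega] at this
          exact this.symm
        have hyne : xt y j ≠ xt x j := (mem_Dset.mp hjD).2
        rw [hyj] at hyne
        exact hyne

lemma Lw_eq_Rw_iff (x : Fin n → Fin 2) {i j : ℕ} (hij : i ≤ j) (hj : j < n) :
    Lw x i j = Rw x i j ↔ AltB x i j := by
  constructor
  · intro h
    have hpt : ∀ m, m < n → xt (Lw x i j) m = xt (Rw x i j) m := by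
      intro m hm; rw [h]
    have key : ∀ d, i + d < j → xt x (i + d) ≠ xt x (i + d + 1) := by
      intro d
      induction d with
      | zero =>
        intro hd
        simp only [Nat.add_zero] at hd ⊢
        have heq := hpt i (by omega)
        rw [xt_Lw x i j i (by omega), xt_Rw x i j i (by omega)] at heq
        rw [if_neg (lt_irrefl i), if_pos hd, if_neg (lt_irrefl i), if_pos rfl] at heq
        rw [heq]
        exact fun hE => fin2_add_one_ne (xt x i) hE.symm
      | succ d ih =>
        intro hd
        have hd' : i + d < j := by omega
        have heq := hpt (i + d + 1) (by omega)
        rw [xt_Lw x i j (i + d + 1) (by omega), xt_Rw x i j (i + d + 1) (by omega)] at heq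
        rw [if_neg (by omega), if_pos (by omega), if_neg (by omega), if_neg (by omega),
          if_pos (by omega)] at heq
        rw [show i + d + 1 - 1 = i + d by omega] at heq
        have h1 := ih hd'
        rw [show i + (d + 1) = i + d + 1 by omega]
        rw [heq]
        exact fun hE => h1 hE.symm
    intro k hk hkj
    have := key (k - i) (by omega)
    rwa [show i + (k - i) = k by omega] at this
  · intro halt
    funext k
    have hkn : (k : ℕ) < n := k.isLt
    have hxt : xt (Lw x i j) (k : ℕ) = xt (Rw x i j) (k : ℕ) := by
      rw [xt_Lw x i j _ hkn, xt_Rw x i j _ hkn]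
      rcases Nat.lt_or_ge (k : ℕ) i with hki | hki
      · rw [if_pos hki, if_pos hki]
      · rcases Nat.eq_or_lt_of_le hki with hki' | hki'
        · rcases Nat.eq_or_lt_of_le hij with rfl | hlt
          · rw [if_neg (by omega), if_neg (by omega), if_pos hki'.symm,
              if_neg (by omega), if_pos hki'.symm]
          · rw [if_neg (by omega), if_pos (by omega), if_neg (by omega), if_pos hki'.symm]
            rw [show (k : ℕ) = i from hki'.symm]
            exact fin2_ne_iff (Ne.symm (halt i le_rfl hlt))
        · rcases Nat.lt_or_ge (k : ℕ) j with hkj | hkj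
          · rw [if_neg (by omega), if_pos hkj, if_neg (by omega), if_neg (by omega),
              if_pos (by omega)]
            have h1 : xt x ((k : ℕ) - 1) ≠ xt x (k : ℕ) := by
              have := halt ((k : ℕ) - 1) (by omega) (by omega)
              rwa [show (k : ℕ) - 1 + 1 = (k : ℕ) by omega] at this
            have h2 : xt x ((k : ℕ) + 1) ≠ xt x (k : ℕ) := by
              exact fun hE => (halt (k : ℕ) (by omega) hkj) hE.symm
            exact fin2_eq_of_ne_ne h2 h1
          · rcases Nat.eq_or_lt_of_le hkj with hkj' | hkj'
            · rw [if_neg (by omega), if_neg (by omega), if_pos hkj'.symm, if_neg (by omega),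
                if_neg (by omega), if_pos (by omega)]
              have h1 : xt x (j - 1) ≠ xt x j := by
                have := halt (j - 1) (by omega) (by omega)
                rwa [show j - 1 + 1 = j by omega] at this
              rw [hkj'.symm]
              exact (fin2_ne_iff h1).symm
            · rw [if_neg (by omega), if_neg (by omega), if_neg (by omega), if_neg (by omega),
                if_neg (by omega), if_neg (by omega)]
    rw [xt_fin, xt_fin] at hxt
    exact hxt

lemma fiber_eq (hn : 1 ≤ n) (x : Fin n → Fin 2) {i j : ℕ} (hij : i ≤ j) (hj : j < n) :
    (fllBall 2 n 1 x).filter (fun y => Fmap x y = (i, j)) =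
      (if i = j ∨ xt x i ≠ xt x (i + 1) then {Lw x i j} else ∅) ∪
        (if i = j ∨ xt x (j - 1) ≠ xt x j then {Rw x i j} else ∅) := by
  ext y
  rw [Finset.mem_filter, Finset.mem_union]
  constructor
  · rintro ⟨hball, hF⟩
    have hne : y ≠ x := by
      rintro rfl
      rw [Fmap_self] at hF
      have := congrArg Prod.snd hF
      simp only at this
      omega
    obtain ⟨-, -, hcl⟩ := ball_classify hn x y hball hne hF
    rcases hcl with ⟨rfl, hc⟩ | ⟨rfl, hc⟩
    · left; rw [if_pos hc]; exact Finset.mem_singleton_self _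
    · right; rw [if_pos hc]; exact Finset.mem_singleton_self _
  · intro h
    rcases h with h | h
    · by_cases hc : i = j ∨ xt x i ≠ xt x (i + 1)
      · rw [if_pos hc, Finset.mem_singleton] at h
        subst h
        exact ⟨Lw_mem_ball x hij hj, Fmap_Lw x hij hj hc⟩
      · rw [if_neg hc] at h
        exact absurd h (Finset.notMem_empty _)
    · by_cases hc : i = j ∨ xt x (j - 1) ≠ xt x j
      · rw [if_pos hc, Finset.mem_singleton] at h
        subst h
        exact ⟨Rw_mem_ball x hij hj, Fmap_Rw x hij hj hc⟩
      · rw [if_neg hc] at h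
        exact absurd h (Finset.notMem_empty _)

lemma fiber_card (hn : 1 ≤ n) (x : Fin n → Fin 2) {i j : ℕ} (hij : i ≤ j) (hj : j < n) :
    ((fllBall 2 n 1 x).filter fun y => Fmap x y = (i, j)).card
        + (if AltB x i j then 1 else 0) =
      (if i = j ∨ xt x i ≠ xt x (i + 1) then 1 else 0) +
        (if i = j ∨ xt x (j - 1) ≠ xt x j then 1 else 0) := by
  rw [fiber_eq hn x hij hj]
  by_cases halt : AltB x i j
  · have hL : i = j ∨ xt x i ≠ xt x (i + 1) := by
      rcases Nat.eq_or_lt_of_le hij with rfl | hlt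
      · exact Or.inl rfl
      · exact Or.inr (halt i le_rfl hlt)
    have hR : i = j ∨ xt x (j - 1) ≠ xt x j := by
      rcases Nat.eq_or_lt_of_le hij with rfl | hlt
      · exact Or.inl rfl
      · right
        have := halt (j - 1) (by omega) (by omega)
        rwa [show j - 1 + 1 = j by omega] at this
    have hLR : Lw x i j = Rw x i j := (Lw_eq_Rw_iff x hij hj).mpr halt
    rw [if_pos halt, if_pos hL, if_pos hR, if_pos hL, if_pos hR, hLR, Finset.union_self,
      Finset.card_singleton]
  · have hij' : i < j := by
      rcases Nat.eq_or_lt_of_le hij with rfl | hlt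
      · exact absurd (AltB_self x i) halt
      · exact hlt
    have hLR : Lw x i j ≠ Rw x i j := fun h => halt ((Lw_eq_Rw_iff x hij hj).mp h)
    rw [if_neg halt]
    by_cases hL : i = j ∨ xt x i ≠ xt x (i + 1)
    · by_cases hR : i = j ∨ xt x (j - 1) ≠ xt x j
      · rw [if_pos hL, if_pos hR, if_pos hL, if_pos hR, ← Finset.insert_eq,
          Finset.card_insert_of_notMem (by simp [hLR]), Finset.card_singleton]
      · rw [if_pos hL, if_neg hR, if_pos hL, if_neg hR, Finset.union_empty,
          Finset.card_singleton]
    · by_cases hR : i = j ∨ xt x (j - 1) ≠ xt x j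
      · rw [if_neg hL, if_pos hR, if_neg hL, if_pos hR, Finset.empty_union,
          Finset.card_singleton]
      · rw [if_neg hL, if_neg hR, if_neg hL, if_neg hR, Finset.union_empty, Finset.card_empty]

end FLLAux
namespace FLLAux

variable {n : ℕ}

noncomputable def Tzero (n : ℕ) : Finset (ℕ × ℕ) :=
  (Finset.range n ×ˢ Finset.range n).filter fun p => p.1 ≤ p.2

lemma x_mem_ball (hn : 1 ≤ n) (x : Fin n → Fin 2) : x ∈ fllBall 2 n 1 x :=
  (mem_fllBall_iff hn x x).mpr (Or.inl rfl)

lemma fiber_diag (hn : 1 ≤ n) (x : Fin n → Fin 2) :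
    (fllBall 2 n 1 x).filter (fun y => Fmap x y = (n, n)) = {x} := by
  ext y
  rw [Finset.mem_filter, Finset.mem_singleton]
  constructor
  · rintro ⟨hb, hF⟩
    by_contra hne
    have hDne := Dset_nonempty hne
    rw [Fmap, dif_pos hDne] at hF
    have h2 := congrArg Prod.snd hF
    simp only at h2
    have hmax := (Dset x y).max'_mem hDne
    have := (mem_Dset.mp hmax).1
    omega
  · rintro rfl
    exact ⟨x_mem_ball hn y, Fmap_self y⟩

lemma card_filter_gt (m i : ℕ) : ((Finset.range m).filter fun j => i < j).card = m - (i + 1) := by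
  have h : ((Finset.range m).filter fun j => i < j) = Finset.Ico (i + 1) m := by
    ext j
    simp only [Finset.mem_filter, Finset.mem_range, Finset.mem_Ico]
    omega
  rw [h, Nat.card_Ico]

lemma card_filter_lt (m j : ℕ) (hj : j ≤ m) :
    ((Finset.range m).filter fun i => i < j).card = j := by
  have h : ((Finset.range m).filter fun i => i < j) = Finset.range j := by
    ext i
    simp only [Finset.mem_filter, Finset.mem_range]
    omega
  rw [h, Finset.card_range]

lemma sum_ite_card {β : Type*} (s : Finset β) (q : β → Prop) [DecidablePred q] :
    ∑ b ∈ s, (if q b then 1 else 0) = (s.filter q).card := by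
  rw [Finset.card_filter]

lemma sum_L_gen (hn : 1 ≤ n) (x : Fin n → Fin 2) :
    (∑ p ∈ Tzero n, if p.1 = p.2 ∨ xt x p.1 ≠ xt x (p.1 + 1) then 1 else 0)
      = n + ∑ i ∈ Finset.range n, (if xt x i ≠ xt x (i + 1) then n - (i + 1) else 0) := by
  classical
  rw [Tzero, Finset.sum_filter, Finset.sum_product]
  have hin : ∀ i ∈ Finset.range n,
      (∑ j ∈ Finset.range n, if i ≤ j then (if i = j ∨ xt x i ≠ xt x (i + 1) then 1 else 0) else 0)
        = 1 + (if xt x i ≠ xt x (i + 1) then n - (i + 1) else 0) := by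
    intro i hi
    rw [Finset.mem_range] at hi
    have hterm : ∀ j ∈ Finset.range n,
        (if i ≤ j then (if i = j ∨ xt x i ≠ xt x (i + 1) then 1 else 0) else 0)
          = (if i = j then 1 else 0) + (if i < j ∧ xt x i ≠ xt x (i + 1) then 1 else 0) := by
      intro j hj
      by_cases h1 : i = j
      · rw [if_pos (le_of_eq h1), if_pos (Or.inl h1), if_pos h1, if_neg (by omega), Nat.add_zero]
      · by_cases h2 : i ≤ j
        · rw [if_pos h2, if_neg h1]
          by_cases h3 : xt x i ≠ xt x (i + 1)
          · rw [if_pos (Or.inr h3), if_pos ⟨by omega, h3⟩]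
          · rw [if_neg (by tauto), if_neg (by tauto), Nat.add_zero]
        · rw [if_neg h2, if_neg h1, if_neg (by omega), Nat.add_zero]
    rw [Finset.sum_congr rfl hterm, Finset.sum_add_distrib]
    congr 1
    · rw [Finset.sum_ite_eq (Finset.range n) i (fun _ => 1), if_pos (Finset.mem_range.mpr hi)]
    · by_cases h3 : xt x i ≠ xt x (i + 1)
      · rw [if_pos h3]
        have : ∀ j ∈ Finset.range n, (if i < j ∧ xt x i ≠ xt x (i + 1) then 1 else 0)
            = (if i < j then 1 else 0) := by
          intro j hj
          by_cases h4 : i < j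
          · rw [if_pos ⟨h4, h3⟩, if_pos h4]
          · rw [if_neg (by tauto), if_neg h4]
        rw [Finset.sum_congr rfl this, sum_ite_card, card_filter_gt]
      · rw [if_neg h3]
        apply Finset.sum_eq_zero
        intro j hj
        rw [if_neg (by tauto)]
  rw [Finset.sum_congr rfl hin, Finset.sum_add_distrib]
  congr 1
  rw [Finset.sum_const, Finset.card_range, smul_eq_mul, Nat.mul_one]

lemma sum_R_gen (hn : 1 ≤ n) (x : Fin n → Fin 2) :
    (∑ p ∈ Tzero n, if p.1 = p.2 ∨ xt x (p.2 - 1) ≠ xt x p.2 then 1 else 0)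
      = n + ∑ j ∈ Finset.range n, (if xt x (j - 1) ≠ xt x j then j else 0) := by
  classical
  rw [Tzero, Finset.sum_filter, Finset.sum_product, Finset.sum_comm]
  have hin : ∀ j ∈ Finset.range n,
      (∑ i ∈ Finset.range n, if i ≤ j then (if i = j ∨ xt x (j - 1) ≠ xt x j then 1 else 0) else 0)
        = 1 + (if xt x (j - 1) ≠ xt x j then j else 0) := by
    intro j hj
    rw [Finset.mem_range] at hj
    have hterm : ∀ i ∈ Finset.range n,
        (if i ≤ j then (if i = j ∨ xt x (j - 1) ≠ xt x j then 1 else 0) else 0)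
          = (if i = j then 1 else 0) + (if i < j ∧ xt x (j - 1) ≠ xt x j then 1 else 0) := by
      intro i hi
      by_cases h1 : i = j
      · rw [if_pos (le_of_eq h1), if_pos (Or.inl h1), if_pos h1, if_neg (by omega), Nat.add_zero]
      · by_cases h2 : i ≤ j
        · rw [if_pos h2, if_neg h1]
          by_cases h3 : xt x (j - 1) ≠ xt x j
          · rw [if_pos (Or.inr h3), if_pos ⟨by omega, h3⟩]
          · rw [if_neg (by tauto), if_neg (by tauto), Nat.add_zero]
        · rw [if_neg h2, if_neg h1, if_neg (by omega), Nat.add_zero]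
    rw [Finset.sum_congr rfl hterm, Finset.sum_add_distrib]
    congr 1
    · rw [Finset.sum_ite_eq' (Finset.range n) j (fun _ => 1), if_pos (Finset.mem_range.mpr hj)]
    · by_cases h3 : xt x (j - 1) ≠ xt x j
      · rw [if_pos h3]
        have : ∀ i ∈ Finset.range n, (if i < j ∧ xt x (j - 1) ≠ xt x j then 1 else 0)
            = (if i < j then 1 else 0) := by
          intro i hi
          by_cases h4 : i < j
          · rw [if_pos ⟨h4, h3⟩, if_pos h4]
          · rw [if_neg (by tauto), if_neg h4]
        rw [Finset.sum_congr rfl this, sum_ite_card, card_filter_lt n j (by omega)]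
      · rw [if_neg h3]
        apply Finset.sum_eq_zero
        intro i hi
        rw [if_neg (by tauto)]
  rw [Finset.sum_congr rfl hin, Finset.sum_add_distrib]
  congr 1
  rw [Finset.sum_const, Finset.card_range, smul_eq_mul, Nat.mul_one]

lemma ball_card_add (hn : 1 ≤ n) (x : Fin n → Fin 2) (a : ℕ)
    (hx : numAltSegs (List.ofFn x) = a) (ha1 : 1 ≤ a) (han : a ≤ n) :
    (fllBall 2 n 1 x).card + Pc x = 1 + n + n * (n - a) := by
  classical
  have hnn_notmem : ((n : ℕ), (n : ℕ)) ∉ Tzero n := by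
    rw [Tzero, Finset.mem_filter, Finset.mem_product]
    rintro ⟨⟨h1, -⟩, -⟩
    exact absurd (Finset.mem_range.mp h1) (lt_irrefl n)
  have hmemT : ∀ y ∈ fllBall 2 n 1 x, Fmap x y ∈ insert ((n : ℕ), (n : ℕ)) (Tzero n) := by
    intro y hy
    by_cases hne : y = x
    · subst hne; rw [Fmap_self]; exact Finset.mem_insert_self _ _
    · have hDne := Dset_nonempty hne
      apply Finset.mem_insert_of_mem
      rw [Fmap, dif_pos hDne, Tzero, Finset.mem_filter, Finset.mem_product]
      have h1 := (mem_Dset.mp ((Dset x y).min'_mem hDne)).1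
      have h2 := (mem_Dset.mp ((Dset x y).max'_mem hDne)).1
      exact ⟨⟨Finset.mem_range.mpr h1, Finset.mem_range.mpr h2⟩,
        Finset.min'_le _ _ ((Dset x y).max'_mem hDne)⟩
  have hcard := Finset.card_eq_sum_card_fiberwise hmemT
  rw [Finset.sum_insert hnn_notmem, fiber_diag hn x, Finset.card_singleton] at hcard
  have hmemT0 : ∀ p ∈ Tzero n, p.1 ≤ p.2 ∧ p.2 < n := by
    intro p hp
    rw [Tzero, Finset.mem_filter, Finset.mem_product] at hp
    exact ⟨hp.2, Finset.mem_range.mp hp.1.2⟩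
  have hsum : (∑ p ∈ Tzero n, ((fllBall 2 n 1 x).filter fun y => Fmap x y = p).card)
      + (∑ p ∈ Tzero n, if AltB x p.1 p.2 then 1 else 0)
      = (∑ p ∈ Tzero n, if p.1 = p.2 ∨ xt x p.1 ≠ xt x (p.1 + 1) then 1 else 0)
        + (∑ p ∈ Tzero n, if p.1 = p.2 ∨ xt x (p.2 - 1) ≠ xt x p.2 then 1 else 0) := by
    rw [← Finset.sum_add_distrib, ← Finset.sum_add_distrib]
    apply Finset.sum_congr rfl
    intro p hp
    obtain ⟨h1, h2⟩ := hmemT0 p hp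
    have := fiber_card hn x h1 h2
    simpa using this
  -- alternating-pairs sum equals n + Pc x
  have hA : (∑ p ∈ Tzero n, if AltB x p.1 p.2 then 1 else 0) = n + Pc x := by
    rw [sum_ite_card]
    have hsplit : (Tzero n).filter (fun p => AltB x p.1 p.2)
        = ((Tzero n).filter fun p => p.1 = p.2) ∪
          ((Finset.range n ×ˢ Finset.range n).filter fun p => p.1 < p.2 ∧ AltB x p.1 p.2) := by
      ext p
      rw [Finset.mem_union]
      simp only [Tzero, Finset.mem_filter, Finset.mem_product, Finset.mem_range]
      constructor
      · rintro ⟨⟨⟨hp1, hp2⟩, hple⟩, halt⟩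
        rcases Nat.eq_or_lt_of_le hple with heq | hlt
        · exact Or.inl ⟨⟨⟨hp1, hp2⟩, le_of_eq heq⟩, heq⟩
        · exact Or.inr ⟨⟨hp1, hp2⟩, hlt, halt⟩
      · rintro (⟨⟨⟨hp1, hp2⟩, hple⟩, heq⟩ | ⟨⟨hp1, hp2⟩, hlt, halt⟩)
        · refine ⟨⟨⟨hp1, hp2⟩, hple⟩, ?_⟩
          rw [heq]
          exact AltB_self x p.2
        · exact ⟨⟨⟨hp1, hp2⟩, le_of_lt hlt⟩, halt⟩
    have hdisj : Disjoint ((Tzero n).filter fun p => p.1 = p.2)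
        ((Finset.range n ×ˢ Finset.range n).filter fun p => p.1 < p.2 ∧ AltB x p.1 p.2) := by
      rw [Finset.disjoint_left]
      intro p hp hp'
      rw [Finset.mem_filter] at hp hp'
      omega
    rw [hsplit, Finset.card_union_of_disjoint hdisj]
    have himg : (Tzero n).filter (fun p => p.1 = p.2) = (Finset.range n).image fun k => (k, k) := by
      ext p
      simp only [Tzero, Finset.mem_filter, Finset.mem_product, Finset.mem_range,
        Finset.mem_image]
      constructor
      · rintro ⟨⟨⟨hp1, hp2⟩, hple⟩, heq⟩
        exact ⟨p.1, hp1, Prod.ext_iff.mpr ⟨rfl, heq⟩⟩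
      · rintro ⟨k, hk, rfl⟩
        exact ⟨⟨⟨hk, hk⟩, le_rfl⟩, rfl⟩
    rw [himg, Finset.card_image_of_injective _ (fun u v huv => congrArg Prod.fst huv),
      Finset.card_range, Pc]
  have hL := sum_L_gen hn x
  have hR := sum_R_gen hn x
  -- reduce the two weighted sums to range (n-1)
  set f : ℕ → ℕ := fun i => if xt x i ≠ xt x (i + 1) then n - (i + 1) else 0 with hf
  set g : ℕ → ℕ := fun j => if xt x (j - 1) ≠ xt x j then j else 0 with hg
  have hSL : ∑ i ∈ Finset.range n, f i = ∑ i ∈ Finset.range (n - 1), f i := by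
    have hflast : f (n - 1) = 0 := by
      have h0 : n - (n - 1 + 1) = 0 := by omega
      simp [hf, h0]
    calc ∑ i ∈ Finset.range n, f i = ∑ i ∈ Finset.range (n - 1 + 1), f i := by
          rw [show n - 1 + 1 = n by omega]
      _ = ∑ i ∈ Finset.range (n - 1), f i + f (n - 1) := Finset.sum_range_succ f (n - 1)
      _ = ∑ i ∈ Finset.range (n - 1), f i := by rw [hflast, Nat.add_zero]
  have hSR : ∑ j ∈ Finset.range n, g j
      = ∑ t ∈ Finset.range (n - 1), (if xt x t ≠ xt x (t + 1) then t + 1 else 0) := by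
    have hg0 : g 0 = 0 := by simp [hg]
    calc ∑ j ∈ Finset.range n, g j = ∑ j ∈ Finset.range (n - 1 + 1), g j := by
          rw [show n - 1 + 1 = n by omega]
      _ = (∑ t ∈ Finset.range (n - 1), g (t + 1)) + g 0 := Finset.sum_range_succ' g (n - 1)
      _ = ∑ t ∈ Finset.range (n - 1), (if xt x t ≠ xt x (t + 1) then t + 1 else 0) := by
          rw [hg0, Nat.add_zero]
          apply Finset.sum_congr rfl
          intro t ht
          rw [hg]
          simp only [Nat.add_sub_cancel]
  -- combine the two sums
  have hComb : (∑ i ∈ Finset.range (n - 1), f i)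
      + (∑ t ∈ Finset.range (n - 1), (if xt x t ≠ xt x (t + 1) then t + 1 else 0))
      = n * ((Finset.range (n - 1)).filter fun t => xt x t ≠ xt x (t + 1)).card := by
    rw [← Finset.sum_add_distrib, ← sum_ite_card, Finset.mul_sum]
    apply Finset.sum_congr rfl
    intro t ht
    rw [Finset.mem_range] at ht
    by_cases hc : xt x t ≠ xt x (t + 1)
    · rw [hf]
      simp only
      rw [if_pos hc, if_pos hc, if_pos hc, Nat.mul_one]
      omega
    · rw [hf]
      simp only
      rw [if_neg hc, if_neg hc, if_neg hc, Nat.mul_zero, Nat.add_zero]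
  -- number of non-breaks
  have hBcard : (Bset x).card = a - 1 := by
    have h1 := numAltSegs_eq_card hn x
    have h2 := card_Eset hn x
    omega
  have hnbcard : ((Finset.range (n - 1)).filter fun t => xt x t ≠ xt x (t + 1)).card
      = n - a := by
    have hpos := Finset.card_filter_add_card_filter_not
      (s := Finset.range (n - 1)) (p := fun t => xt x t = xt x (t + 1))
    have heq : ((Finset.range (n - 1)).filter fun t => ¬ (xt x t = xt x (t + 1)))
        = ((Finset.range (n - 1)).filter fun t => xt x t ≠ xt x (t + 1)) := by
      apply Finset.filter_congr
      intro t ht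
      rw [ne_eq]
    rw [heq] at hpos
    have hB : ((Finset.range (n - 1)).filter fun t => xt x t = xt x (t + 1)) = Bset x := by
      rw [Bset]
    rw [hB, Finset.card_range] at hpos
    omega
  rw [hnbcard] at hComb
  rw [hA, hL, hR, hSL, hSR] at hsum
  -- `hcard : ball.card = 1 + Σ fib` ; conclude
  omega

end FLLAux
namespace FLLAux

lemma int_consec_nonneg (t : ℤ) : 0 ≤ t * (t + 1) := by
  rcases le_or_gt 0 t with h | h
  · exact mul_nonneg h (by omega)
  · have h2 : (0 : ℤ) ≤ (-t) * (-(t + 1)) := mul_nonneg (by omega) (by omega)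
    rwa [neg_mul_neg] at h2

lemma cast_h_term (L : ℕ) (h : 1 ≤ L) :
    ((L * (L - 1) : ℕ) : ℤ) = (L : ℤ) * ((L : ℤ) - 1) := by
  rw [Nat.cast_mul, Nat.cast_sub h, Nat.cast_one]

lemma opt_main (S : Finset (ℕ × ℕ)) (f : ℕ × ℕ → ℕ) (a nn q : ℕ) (hq : 1 ≤ q)
    (hf1 : ∀ p ∈ S, 1 ≤ f p) (hcard : S.card = a) (hsum : ∑ p ∈ S, f p = nn) :
    (2 * ((q : ℤ) - 1) * nn - a * q * ((q : ℤ) - 1)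
        ≤ ((∑ p ∈ S, f p * (f p - 1) : ℕ) : ℤ)) ∧
      ((2 * ((q : ℤ) - 1) * nn - a * q * ((q : ℤ) - 1)
          = ((∑ p ∈ S, f p * (f p - 1) : ℕ) : ℤ)) ↔ ∀ p ∈ S, f p = q ∨ f p = q - 1) := by
  have hcast : ((∑ p ∈ S, f p * (f p - 1) : ℕ) : ℤ)
      = ∑ p ∈ S, ((f p : ℤ) * ((f p : ℤ) - 1)) := by
    rw [Nat.cast_sum]
    exact Finset.sum_congr rfl fun p hp => cast_h_term (f p) (hf1 p hp)
  have hsum' : ∑ p ∈ S, ((f p : ℤ)) = (nn : ℤ) := by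
    rw [← Nat.cast_sum, hsum]
  have hdecomp : ∑ p ∈ S, ((f p : ℤ) * ((f p : ℤ) - 1))
      = (∑ p ∈ S, ((f p : ℤ) - q) * ((f p : ℤ) - q + 1))
        + (2 * ((q : ℤ) - 1) * nn - a * q * ((q : ℤ) - 1)) := by
    have h1 : ∀ p ∈ S, ((f p : ℤ) * ((f p : ℤ) - 1))
        = ((f p : ℤ) - q) * ((f p : ℤ) - q + 1)
          + (2 * ((q : ℤ) - 1) * (f p : ℤ) - (q : ℤ) * ((q : ℤ) - 1)) := by
      intro p hp; ring
    rw [Finset.sum_congr rfl h1, Finset.sum_add_distrib, Finset.sum_sub_distrib,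
      ← Finset.mul_sum, hsum', Finset.sum_const, hcard, nsmul_eq_mul]
    ring
  have hG : 0 ≤ ∑ p ∈ S, ((f p : ℤ) - q) * ((f p : ℤ) - q + 1) :=
    Finset.sum_nonneg fun p hp => int_consec_nonneg _
  constructor
  · rw [hcast, hdecomp]
    omega
  · rw [hcast, hdecomp]
    constructor
    · intro heq
      have hG0 : ∑ p ∈ S, ((f p : ℤ) - q) * ((f p : ℤ) - q + 1) = 0 := by omega
      have hterm := (Finset.sum_eq_zero_iff_of_nonneg
        (fun p hp => int_consec_nonneg ((f p : ℤ) - q))).mp hG0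
      intro p hp
      have := hterm p hp
      rcases mul_eq_zero.mp this with h | h
      · left; omega
      · right; omega
    · intro hall
      have hG0 : ∑ p ∈ S, ((f p : ℤ) - q) * ((f p : ℤ) - q + 1) = 0 := by
        apply Finset.sum_eq_zero
        intro p hp
        rcases hall p hp with h | h
        · have h0 : (f p : ℤ) - q = 0 := by omega
          rw [h0, zero_mul]
        · have h0 : (f p : ℤ) - q + 1 = 0 := by omega
          rw [h0, mul_zero]
      omega

end FLLAux
namespace FLLAux

def qv (n a : ℕ) : ℕ := (n + a - 1) / a
def rv (n a : ℕ) : ℕ := n - a * (qv n a - 1)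
def cv (n a k : ℕ) : ℕ :=
  if k ≤ rv n a then k * qv n a else rv n a * qv n a + (k - rv n a) * (qv n a - 1)

lemma q_facts (n a : ℕ) (hn : 1 ≤ n) (ha1 : 1 ≤ a) (han : a ≤ n) :
    1 ≤ qv n a ∧ n ≤ a * qv n a ∧ a * (qv n a - 1) + 1 ≤ n ∧ 1 ≤ rv n a ∧ rv n a ≤ a := by
  have hdm := Nat.div_add_mod (n + a - 1) a
  have hmlt : (n + a - 1) % a < a := Nat.mod_lt _ (by omega)
  have hq1 : 1 ≤ qv n a := (Nat.one_le_div_iff (by omega)).mpr (by omega)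
  have hqq : a * qv n a + (n + a - 1) % a = n + a - 1 := hdm
  have hsub : a * (qv n a - 1) + a = a * qv n a := by
    calc a * (qv n a - 1) + a = a * (qv n a - 1 + 1) := by ring
      _ = a * qv n a := by rw [show qv n a - 1 + 1 = qv n a by omega]
  refine ⟨hq1, by omega, by omega, ?_, ?_⟩
  · rw [rv]; omega
  · rw [rv]; omega

lemma cv_zero (n a : ℕ) : cv n a 0 = 0 := by
  rw [cv, if_pos (Nat.zero_le _), Nat.zero_mul]

lemma cv_succ (n a : ℕ) (hn : 1 ≤ n) (ha1 : 1 ≤ a) (han : a ≤ n) (k : ℕ) (hk : k + 1 ≤ a) :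
    cv n a (k + 1) = cv n a k + (if k + 1 ≤ rv n a then qv n a else qv n a - 1) := by
  obtain ⟨hq1, hq2, hq3, hr1, hr2⟩ := q_facts n a hn ha1 han
  by_cases h : k + 1 ≤ rv n a
  · rw [if_pos h, cv, if_pos h, cv, if_pos (by omega), Nat.succ_mul]
  · rw [if_neg h, cv, if_neg h]
    by_cases h2 : k ≤ rv n a
    · have hk2 : k = rv n a := by omega
      rw [cv, if_pos h2, hk2, show rv n a + 1 - rv n a = 1 by omega, Nat.one_mul]
    · rw [cv, if_neg h2, show k + 1 - rv n a = (k - rv n a) + 1 by omega, Nat.succ_mul]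
      omega

lemma cv_step_pos (n a : ℕ) (hn : 1 ≤ n) (ha1 : 1 ≤ a) (han : a ≤ n) (k : ℕ)
    (hk : k + 1 ≤ a) : cv n a k < cv n a (k + 1) := by
  obtain ⟨hq1, hq2, hq3, hr1, hr2⟩ := q_facts n a hn ha1 han
  rw [cv_succ n a hn ha1 han k hk]
  by_cases h : k + 1 ≤ rv n a
  · rw [if_pos h]; omega
  · rw [if_neg h]
    have hra : rv n a < a := by omega
    have hq2' : 2 ≤ qv n a := by
      by_contra hq
      have hq1' : qv n a = 1 := by omega
      have h1 : a * qv n a = a := by rw [hq1', Nat.mul_one]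
      have h2 : a * (qv n a - 1) = 0 := by rw [hq1']; simp
      rw [rv, h2, Nat.sub_zero] at hra
      omega
    omega

lemma cv_mono (n a : ℕ) (hn : 1 ≤ n) (ha1 : 1 ≤ a) (han : a ≤ n) :
    ∀ {k k' : ℕ}, k < k' → k' ≤ a → cv n a k < cv n a k' := by
  intro k k' hkk hk'
  induction k' with
  | zero => omega
  | succ m ih =>
    rcases Nat.lt_or_ge k m with h | h
    · exact lt_trans (ih h (by omega)) (cv_step_pos n a hn ha1 han m hk')
    · have hkm : k = m := by omega
      subst hkm
      exact cv_step_pos n a hn ha1 han k hk'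

lemma cv_last (n a : ℕ) (hn : 1 ≤ n) (ha1 : 1 ≤ a) (han : a ≤ n) : cv n a a = n := by
  obtain ⟨hq1, hq2, hq3, hr1, hr2⟩ := q_facts n a hn ha1 han
  have e3 : rv n a = n - a * (qv n a - 1) := rfl
  rw [cv]
  by_cases h : a ≤ rv n a
  · rw [if_pos h]
    have h2 : a * (qv n a - 1) + a = a * qv n a := by
      calc a * (qv n a - 1) + a = a * (qv n a - 1 + 1) := by ring
        _ = a * qv n a := by rw [show qv n a - 1 + 1 = qv n a by omega]
    have hcomm : a * qv n a = qv n a * a := Nat.mul_comm _ _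
    omega
  · rw [if_neg h]
    have e1 : (a - rv n a) * (qv n a - 1) + rv n a * (qv n a - 1) = a * (qv n a - 1) := by
      rw [← Nat.add_mul, show a - rv n a + rv n a = a by omega]
    have e2 : rv n a * (qv n a - 1) + rv n a = rv n a * qv n a := by
      calc rv n a * (qv n a - 1) + rv n a = rv n a * (qv n a - 1 + 1) := by ring
        _ = rv n a * qv n a := by rw [show qv n a - 1 + 1 = qv n a by omega]
    omega

lemma cv_le_n (n a : ℕ) (hn : 1 ≤ n) (ha1 : 1 ≤ a) (han : a ≤ n) {k : ℕ} (hk : k ≤ a) :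
    cv n a k ≤ n := by
  rcases Nat.eq_or_lt_of_le hk with heq | hlt
  · rw [heq, cv_last n a hn ha1 han]
  · have := cv_mono n a hn ha1 han hlt le_rfl
    rw [cv_last n a hn ha1 han] at this
    omega

lemma cv_pos (n a : ℕ) (hn : 1 ≤ n) (ha1 : 1 ≤ a) (han : a ≤ n) {k : ℕ} (hk1 : 1 ≤ k)
    (hk2 : k ≤ a) : 1 ≤ cv n a k := by
  have := cv_mono n a hn ha1 han (show 0 < k by omega) hk2
  rw [cv_zero] at this
  omega

noncomputable def cnt (n a t : ℕ) : ℕ :=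
  ((Finset.Icc 1 (a - 1)).filter fun k => cv n a k ≤ t).card

open Fin.NatCast in
noncomputable def wB (n a : ℕ) : Fin n → Fin 2 := fun t =>
  ((((t : ℕ) + cnt n a (t : ℕ)) % 2 : ℕ) : Fin 2)

open Fin.NatCast in
lemma xt_wB (n a t : ℕ) (ht : t < n) :
    xt (wB n a) t = (((t + cnt n a t) % 2 : ℕ) : Fin 2) := by
  rw [xt_lt _ ht]
  rfl

open Fin.NatCast in
lemma fin2_cast_eq_iff (u v : ℕ) : ((u : Fin 2) = (v : Fin 2)) ↔ u % 2 = v % 2 := by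
  rw [Fin.ext_iff, Fin.val_natCast, Fin.val_natCast]

lemma cnt_succ (n a : ℕ) (hn : 1 ≤ n) (ha1 : 1 ≤ a) (han : a ≤ n) (t : ℕ) :
    cnt n a (t + 1) = cnt n a t + if ∃ k, 1 ≤ k ∧ k ≤ a - 1 ∧ cv n a k = t + 1 then 1 else 0 := by
  classical
  rw [cnt, cnt]
  have hsplit : (Finset.Icc 1 (a - 1)).filter (fun k => cv n a k ≤ t + 1)
      = (Finset.Icc 1 (a - 1)).filter (fun k => cv n a k ≤ t)
        ∪ (Finset.Icc 1 (a - 1)).filter (fun k => cv n a k = t + 1) := by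
    ext k
    simp only [Finset.mem_union, Finset.mem_filter, Finset.mem_Icc]
    omega
  have hdisj : Disjoint ((Finset.Icc 1 (a - 1)).filter (fun k => cv n a k ≤ t))
      ((Finset.Icc 1 (a - 1)).filter (fun k => cv n a k = t + 1)) := by
    rw [Finset.disjoint_left]
    intro k h1 h2
    rw [Finset.mem_filter] at h1 h2
    omega
  rw [hsplit, Finset.card_union_of_disjoint hdisj]
  congr 1
  by_cases h : ∃ k, 1 ≤ k ∧ k ≤ a - 1 ∧ cv n a k = t + 1
  · rw [if_pos h]
    obtain ⟨k0, hk1, hk2, hk3⟩ := h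
    apply Finset.card_eq_one.mpr
    refine ⟨k0, ?_⟩
    ext k
    simp only [Finset.mem_filter, Finset.mem_Icc, Finset.mem_singleton]
    constructor
    · rintro ⟨⟨h1, h2⟩, h3⟩
      by_contra hne
      rcases Nat.lt_or_ge k k0 with hlt | hge
      · have := cv_mono n a hn ha1 han hlt (by omega)
        omega
      · have := cv_mono n a hn ha1 han (show k0 < k by omega) (by omega)
        omega
    · rintro rfl
      exact ⟨⟨hk1, hk2⟩, hk3⟩
  · rw [if_neg h]
    apply Finset.card_eq_zero.mpr
    rw [Finset.filter_eq_empty_iff]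
    intro k hk
    rw [Finset.mem_Icc] at hk
    exact fun hc => h ⟨k, hk.1, hk.2, hc⟩

lemma brk_wB (n a : ℕ) (hn : 1 ≤ n) (ha1 : 1 ≤ a) (han : a ≤ n) (t : ℕ) (ht : t + 1 < n) :
    (xt (wB n a) t = xt (wB n a) (t + 1)) ↔ ∃ k, 1 ≤ k ∧ k ≤ a - 1 ∧ cv n a k = t + 1 := by
  rw [xt_wB n a t (by omega), xt_wB n a (t + 1) ht, fin2_cast_eq_iff,
    cnt_succ n a hn ha1 han t]
  by_cases h : ∃ k, 1 ≤ k ∧ k ≤ a - 1 ∧ cv n a k = t + 1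
  · rw [if_pos h]
    simp only [h, iff_true]
    omega
  · rw [if_neg h]
    simp only [h, iff_false]
    omega

lemma Eset_wB (n a : ℕ) (hn : 1 ≤ n) (ha1 : 1 ≤ a) (han : a ≤ n) :
    Eset (wB n a) = (Finset.Icc 1 a).image fun k => cv n a k - 1 := by
  ext j
  rw [mem_Eset, Finset.mem_image]
  constructor
  · rintro ⟨hjn, hcase⟩
    by_cases hj1 : j = n - 1
    · refine ⟨a, Finset.mem_Icc.mpr ⟨ha1, le_rfl⟩, ?_⟩
      rw [cv_last n a hn ha1 han]
      omega
    · rcases hcase with h0 | hbrk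
      · omega
      · have ht : j + 1 < n := by omega
        obtain ⟨k, hk1, hk2, hk3⟩ := (brk_wB n a hn ha1 han j ht).mp hbrk
        exact ⟨k, Finset.mem_Icc.mpr ⟨hk1, by omega⟩, by omega⟩
  · rintro ⟨k, hk, rfl⟩
    rw [Finset.mem_Icc] at hk
    have hck_pos : 1 ≤ cv n a k := cv_pos n a hn ha1 han hk.1 hk.2
    have hck_le : cv n a k ≤ n := cv_le_n n a hn ha1 han hk.2
    refine ⟨by omega, ?_⟩
    rcases Nat.eq_or_lt_of_le hk.2 with heq | hlt
    · left
      rw [heq, cv_last n a hn ha1 han]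
    · right
      have hcklt : cv n a k < n := by
        have := cv_mono n a hn ha1 han hlt le_rfl
        rwa [cv_last n a hn ha1 han] at this
      have ht : (cv n a k - 1) + 1 < n := by omega
      apply (brk_wB n a hn ha1 han _ ht).mpr
      exact ⟨k, hk.1, by omega, by omega⟩

lemma numAltSegs_wB (n a : ℕ) (hn : 1 ≤ n) (ha1 : 1 ≤ a) (han : a ≤ n) :
    numAltSegs (List.ofFn (wB n a)) = a := by
  rw [numAltSegs_eq_card hn, Eset_wB n a hn ha1 han, Finset.card_image_of_injOn, Nat.card_Icc]
  · omega
  · intro u hu v hv huv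
    simp only at huv
    rw [Finset.mem_coe, Finset.mem_Icc] at hu hv
    by_contra hne
    have hu1 : 1 ≤ cv n a u := cv_pos n a hn ha1 han hu.1 hu.2
    have hv1 : 1 ≤ cv n a v := cv_pos n a hn ha1 han hv.1 hv.2
    rcases Nat.lt_or_ge u v with hlt | hge
    · have := cv_mono n a hn ha1 han hlt hv.2
      omega
    · have := cv_mono n a hn ha1 han (show v < u by omega) hu.2
      omega

lemma stIdx_wB (n a : ℕ) (hn : 1 ≤ n) (ha1 : 1 ≤ a) (han : a ≤ n) (k : ℕ) (hk1 : 1 ≤ k)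
    (hk2 : k ≤ a) : stIdx (wB n a) (cv n a k - 1) = cv n a (k - 1) := by
  have hck : cv n a (k - 1) < cv n a k := cv_mono n a hn ha1 han (by omega) hk2
  have hckn : cv n a k ≤ n := cv_le_n n a hn ha1 han hk2
  have hck1 : 1 ≤ cv n a k := cv_pos n a hn ha1 han hk1 hk2
  apply le_antisymm
  · apply stIdx_min
    intro t ht ht' hbrk
    have ht1 : t + 1 < n := by omega
    obtain ⟨m, hm1, hm2, hm3⟩ := (brk_wB n a hn ha1 han t ht1).mp hbrk
    rcases Nat.lt_or_ge m k with hmk | hmk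
    · have hle : cv n a m ≤ cv n a (k - 1) := by
        rcases Nat.eq_or_lt_of_le (show m ≤ k - 1 by omega) with heq | hh
        · rw [heq]
        · exact le_of_lt (cv_mono n a hn ha1 han hh (by omega))
      omega
    · have hge : cv n a k ≤ cv n a m := by
        rcases Nat.eq_or_lt_of_le hmk with heq | hh
        · rw [← heq]
        · exact le_of_lt (cv_mono n a hn ha1 han hh (by omega))
      omega
  · by_contra hlt
    push_neg at hlt
    have hk1' : 1 ≤ k - 1 := by
      by_contra h0
      have hz : k - 1 = 0 := by omega
      rw [hz, cv_zero] at hlt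
      omega
    have hckm1 : 1 ≤ cv n a (k - 1) := cv_pos n a hn ha1 han hk1' (by omega)
    have hbrk : xt (wB n a) (cv n a (k - 1) - 1) = xt (wB n a) (cv n a (k - 1) - 1 + 1) := by
      have ht1 : (cv n a (k - 1) - 1) + 1 < n := by omega
      apply (brk_wB n a hn ha1 han _ ht1).mpr
      exact ⟨k - 1, hk1', by omega, by omega⟩
    rw [show cv n a (k - 1) - 1 + 1 = cv n a (k - 1) by omega] at hbrk
    have halt := stIdx_alt (wB n a) (cv n a k - 1)
    have := halt (cv n a (k - 1) - 1) (by omega) (by omega)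
    rw [show cv n a (k - 1) - 1 + 1 = cv n a (k - 1) by omega] at this
    exact this hbrk

lemma balanced_wB (n a : ℕ) (hn : 1 ≤ n) (ha1 : 1 ≤ a) (han : a ≤ n) :
    ∀ p ∈ maxAltSegs (List.ofFn (wB n a)),
      p.2 + 1 - p.1 = qv n a ∨ p.2 + 1 - p.1 = qv n a - 1 := by
  intro p hp
  rw [maxAltSegs_eq hn, Eset_wB n a hn ha1 han, Finset.mem_image] at hp
  obtain ⟨j, hj, rfl⟩ := hp
  rw [Finset.mem_image] at hj
  obtain ⟨k, hk, rfl⟩ := hj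
  rw [Finset.mem_Icc] at hk
  have hck : cv n a (k - 1) < cv n a k := cv_mono n a hn ha1 han (by omega) hk.2
  have hck1 : 1 ≤ cv n a k := cv_pos n a hn ha1 han hk.1 hk.2
  rw [stIdx_wB n a hn ha1 han k hk.1 hk.2]
  simp only
  have hstep := cv_succ n a hn ha1 han (k - 1) (by omega)
  rw [show k - 1 + 1 = k by omega] at hstep
  by_cases h : k ≤ rv n a
  · left
    rw [if_pos h] at hstep
    omega
  · right
    rw [if_neg h] at hstep
    omega

end FLLAux
/-- For `1 ≤ a ≤ n`, among binary sequences with `A(y) = a`, the FLL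
`1`-ball size is maximal exactly at the `a`-balanced sequences. -/
theorem max_fll_ball_fixed_numAltSegs (n a : ℕ) (hn : 1 ≤ n) (ha1 : 1 ≤ a) (han : a ≤ n)
    (x : Fin n → Fin 2) (hx : numAltSegs (List.ofFn x) = a) :
    (∀ y : Fin n → Fin 2, numAltSegs (List.ofFn y) = a →
        (fllBall 2 n 1 y).card ≤ (fllBall 2 n 1 x).card) ↔ IsBalanced n a x := by
  classical
  obtain ⟨hq1, hq2, hq3, hr1, hr2⟩ := FLLAux.q_facts n a hn ha1 han
  have hqv : FLLAux.qv n a = (n + a - 1) / a := rfl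
  have hopt : ∀ y : Fin n → Fin 2, numAltSegs (List.ofFn y) = a →
      (2 * ((FLLAux.qv n a : ℤ) - 1) * n
            - a * FLLAux.qv n a * ((FLLAux.qv n a : ℤ) - 1)
          ≤ ((2 * FLLAux.Pc y : ℕ) : ℤ)) ∧
      ((2 * ((FLLAux.qv n a : ℤ) - 1) * n
            - a * FLLAux.qv n a * ((FLLAux.qv n a : ℤ) - 1)
          = ((2 * FLLAux.Pc y : ℕ) : ℤ)) ↔
        ∀ p ∈ maxAltSegs (List.ofFn y),
          p.2 + 1 - p.1 = FLLAux.qv n a ∨ p.2 + 1 - p.1 = FLLAux.qv n a - 1) := by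
    intro y hy
    have h2P := FLLAux.two_Pc hn y
    have hmain := FLLAux.opt_main (maxAltSegs (List.ofFn y)) (fun p => p.2 + 1 - p.1)
      a n (FLLAux.qv n a) hq1 (FLLAux.maxAltSegs_len_pos hn y)
      (show (maxAltSegs (List.ofFn y)).card = a from hy)
      (FLLAux.sum_maxAltSegs_len hn y)
    rw [← h2P] at hmain
    exact hmain
  have hwA : numAltSegs (List.ofFn (FLLAux.wB n a)) = a := FLLAux.numAltSegs_wB n a hn ha1 han
  have hwbal := FLLAux.balanced_wB n a hn ha1 han
  have hwM := (hopt (FLLAux.wB n a) hwA).2.mpr hwbal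
  have hbx := FLLAux.ball_card_add hn x a hx ha1 han
  have hbw := FLLAux.ball_card_add hn (FLLAux.wB n a) a hwA ha1 han
  constructor
  · intro hmaxx
    refine ⟨hx, ?_⟩
    rw [← hqv]
    apply (hopt x hx).2.mp
    have h1 := (hopt x hx).1
    have hcards := hmaxx (FLLAux.wB n a) hwA
    omega
  · intro hbal
    intro y hy
    have hbalq := hbal.2
    rw [← hqv] at hbalq
    have hxM := (hopt x hx).2.mpr hbalq
    have h1 := (hopt y hy).1
    have hby := FLLAux.ball_card_add hn y a hy ha1 han
    omega
end
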